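/- arXiv:1706.01015 — 9 statements merged into one kernel-verified Lean document; each statement's English description precedes it below -/
import Mathlib

section
/- For every integer n ≥ 2 and every real number r > 0, the values p_{n,r}(k) for k = 0, …, n−1 sum to 1, i.e. ∑_{k=0}^{n−1} [2r(2r+1)/((n+2r)(n−1+2r))] · (k+1) · ∏_{i=1}^{k} (n−i)/(n−i+2r−1) = 1 (where the empty product, for k = 0, equals 1). -/
open Filter Finset

/-- The probability mass function of the degree of a fixed vertex of the
split-and-drift random graph `G_{n,r}`:
`p_{n,r}(k) = [2r(2r+1)/((n+2r)(n−1+2r))] · (k+1) · ∏_{i=1}^{k} (n−i)/(n−i+2r−1)`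
for `k < n` (with the empty product equal to `1`), and `0` for `k ≥ n`. -/
noncomputable def splitDriftPMF (n : ℕ) (r : ℝ) (k : ℕ) : ℝ :=
  if k < n then
    2 * r * (2 * r + 1) / (((n : ℝ) + 2 * r) * ((n : ℝ) - 1 + 2 * r)) *
      ((k : ℝ) + 1) *
      ∏ i ∈ Finset.Icc 1 k, (((n : ℝ) - (i : ℝ)) / ((n : ℝ) - (i : ℝ) + 2 * r - 1))
  else 0

/-- Auxiliary product `P(k) = ∏_{i=1}^k (n−i)/(n−i+c−1)`. -/
noncomputable def sdP (n : ℕ) (c : ℝ) (k : ℕ) : ℝ :=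
  ∏ i ∈ Finset.Icc 1 k, (((n : ℝ) - (i : ℝ)) / ((n : ℝ) - (i : ℝ) + c - 1))

/-- Telescoping auxiliary function. -/
noncomputable def sdF (n : ℕ) (c : ℝ) (k : ℕ) : ℝ :=
  (c * (k : ℝ) + (n : ℝ) + c) * ((n : ℝ) - (k : ℝ) + c - 1) * sdP n c k

lemma sdP_succ (n : ℕ) (c : ℝ) (k : ℕ) :
    sdP n c (k + 1)
      = sdP n c k * (((n : ℝ) - ((k : ℝ) + 1)) / ((n : ℝ) - ((k : ℝ) + 1) + c - 1)) := by
  unfold sdP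
  rw [Finset.prod_Icc_succ_top (Nat.le_add_left 1 k)]
  push_cast
  ring

lemma sdP_self (n : ℕ) (hn : 1 ≤ n) (c : ℝ) : sdP n c n = 0 := by
  apply Finset.prod_eq_zero (Finset.mem_Icc.mpr ⟨hn, le_refl n⟩)
  simp

lemma sdF_step (n : ℕ) (c : ℝ) (hc : 0 < c) (k : ℕ) (hk : k < n) :
    sdF n c k - sdF n c (k + 1) = c * (c + 1) * ((k : ℝ) + 1) * sdP n c k := by
  rcases eq_or_lt_of_le (Nat.succ_le_of_lt hk) with h | h
  · -- k + 1 = n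
    have hn : (n : ℝ) = (k : ℝ) + 1 := by exact_mod_cast h.symm
    have hz : sdP n c (k + 1) = 0 := by
      rw [sdP_succ, hn]
      simp
    unfold sdF
    rw [hz, hn]
    push_cast
    ring
  · -- k + 1 < n
    have h2 : (k : ℝ) + 2 ≤ (n : ℝ) := by exact_mod_cast h
    have hD : (n : ℝ) - ((k : ℝ) + 1) + c - 1 ≠ 0 := by
      have : (0 : ℝ) < (n : ℝ) - ((k : ℝ) + 1) + c - 1 := by linarith
      linarith
    unfold sdF
    rw [sdP_succ]
    push_cast
    field_simp
    ring

/-- For every integer `n ≥ 2` and real `r > 0`, the values `p_{n,r}(k)`,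
`k = 0, …, n−1`, sum to `1`. -/
theorem sum_splitDriftPMF_eq_one (n : ℕ) (hn : 2 ≤ n) (r : ℝ) (hr : 0 < r) :
    ∑ k ∈ Finset.range n, splitDriftPMF n r k = 1 := by
  have hc : (0 : ℝ) < 2 * r := by linarith
  have hn1 : (2 : ℝ) ≤ (n : ℝ) := by exact_mod_cast hn
  have hA : (0 : ℝ) < (n : ℝ) + 2 * r := by linarith
  have hB : (0 : ℝ) < (n : ℝ) - 1 + 2 * r := by linarith
  -- the telescoping sum
  have htel : ∑ k ∈ Finset.range n, (sdF n (2 * r) k - sdF n (2 * r) (k + 1))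
      = sdF n (2 * r) 0 - sdF n (2 * r) n := Finset.sum_range_sub' _ n
  have hF0 : sdF n (2 * r) 0 = ((n : ℝ) + 2 * r) * ((n : ℝ) - 1 + 2 * r) := by
    unfold sdF sdP
    rw [Finset.Icc_eq_empty (by norm_num), Finset.prod_empty]
    push_cast
    ring
  have hFn : sdF n (2 * r) n = 0 := by
    unfold sdF
    rw [sdP_self n (by omega) (2 * r)]
    ring
  have key : ∑ k ∈ Finset.range n,
      (2 * r * (2 * r + 1) * ((k : ℝ) + 1) * sdP n (2 * r) k)
      = ((n : ℝ) + 2 * r) * ((n : ℝ) - 1 + 2 * r) := by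
    rw [← hF0]
    calc ∑ k ∈ Finset.range n, (2 * r * (2 * r + 1) * ((k : ℝ) + 1) * sdP n (2 * r) k)
        = ∑ k ∈ Finset.range n, (sdF n (2 * r) k - sdF n (2 * r) (k + 1)) := by
          refine Finset.sum_congr rfl fun k hk => ?_
          rw [sdF_step n (2 * r) hc k (Finset.mem_range.mp hk)]
      _ = sdF n (2 * r) 0 - sdF n (2 * r) n := htel
      _ = sdF n (2 * r) 0 := by rw [hFn]; ring
  have hrw : ∑ k ∈ Finset.range n, splitDriftPMF n r k
      = (1 / (((n : ℝ) + 2 * r) * ((n : ℝ) - 1 + 2 * r))) *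
        ∑ k ∈ Finset.range n, (2 * r * (2 * r + 1) * ((k : ℝ) + 1) * sdP n (2 * r) k) := by
    rw [Finset.mul_sum]
    refine Finset.sum_congr rfl fun k hk => ?_
    rw [splitDriftPMF, if_pos (Finset.mem_range.mp hk)]
    unfold sdP
    ring
  rw [hrw, key, one_div, inv_mul_cancel₀ (ne_of_gt (mul_pos hA hB))]
end

section
/- Let (r_n) be a sequence of positive real numbers with r_n/n → ∞ as n → ∞. Then p_{n,r_n}(0) = 2r_n(2r_n+1)/((n+2r_n)(n−1+2r_n)) → 1 as n → ∞. (Sparse regime: the degree of a fixed vertex equals 0 with probability tending to 1.) -/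
open Filter Finset

/-- Sparse regime: if `r_n/n → ∞`, then
`p_{n,r_n}(0) = 2r_n(2r_n+1)/((n+2r_n)(n-1+2r_n)) → 1`. -/
theorem degree_zero_of_rn_over_n_tendsto_atTop (r : ℕ → ℝ) (hr : ∀ n, 0 < r n)
    (h : Tendsto (fun n => r n / (n : ℝ)) atTop atTop) :
    Tendsto (fun n => splitDriftPMF n (r n) 0) atTop (nhds 1) := by
  have hrtop : Tendsto r atTop atTop := by
    have hle : (fun (n : ℕ) => r n / (n : ℝ)) ≤ᶠ[(atTop : Filter ℕ)] r := by
      filter_upwards [eventually_ge_atTop 1] with n hn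
      exact div_le_self (hr n).le (by exact_mod_cast hn)
    exact tendsto_atTop_mono' atTop hle h
  have ha : Tendsto (fun (n : ℕ) => (n : ℝ) / r n) atTop (nhds 0) := by
    simpa [Pi.inv_def, inv_div] using h.inv_tendsto_atTop
  have hb : Tendsto (fun n => (r n)⁻¹) atTop (nhds 0) := hrtop.inv_tendsto_atTop
  have hlim : Tendsto (fun (n : ℕ) => (2 * (2 + (r n)⁻¹)) /
      (((n : ℝ) / r n + 2) * ((n : ℝ) / r n - (r n)⁻¹ + 2))) atTop (nhds 1) := by
    have hnum : Tendsto (fun (n : ℕ) => 2 * (2 + (r n)⁻¹)) atTop (nhds (2 * (2 + 0))) :=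
      tendsto_const_nhds.mul (tendsto_const_nhds.add hb)
    have hden : Tendsto (fun (n : ℕ) => ((n : ℝ) / r n + 2) * ((n : ℝ) / r n - (r n)⁻¹ + 2))
        atTop (nhds ((0 + 2) * (0 - 0 + 2))) :=
      (ha.add tendsto_const_nhds).mul ((ha.sub hb).add tendsto_const_nhds)
    have := hnum.div hden (by norm_num)
    have h2 : (2 : ℝ) * (2 + 0) / ((0 + 2) * (0 - 0 + 2)) = 1 := by norm_num
    rw [h2] at this
    exact this
  refine hlim.congr' ?_
  filter_upwards [eventually_ge_atTop 1] with n hn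
  have hn0 : 0 < n := hn
  have hn1 : (1 : ℝ) ≤ (n : ℝ) := by exact_mod_cast hn
  have hr0 : r n ≠ 0 := (hr n).ne'
  have hd1 : (n : ℝ) + 2 * r n ≠ 0 := by
    have := hr n; linarith
  have hd2 : (n : ℝ) - 1 + 2 * r n ≠ 0 := by
    have : (0:ℝ) < (n : ℝ) - 1 + 2 * r n := by
      have := hr n; linarith
    exact this.ne'
  simp only [splitDriftPMF, if_pos hn0, Nat.cast_zero, Finset.Icc_self]
  rw [show Finset.Icc 1 0 = (∅ : Finset ℕ) by decide]
  simp only [Finset.prod_empty]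
  field_simp
  ring
end

section
/- Let (r_n) be a sequence of positive real numbers such that 2r_n/n → ρ for some ρ > 0. Then for every fixed integer k ≥ 0, p_{n,r_n}(k) → (k+1) · (ρ/(1+ρ))² · (1/(1+ρ))^k as n → ∞. Equivalently, the degree D_n plus one converges in distribution to a size-biased geometric random variable with parameter ρ/(1+ρ). -/
open Filter Finset

private lemma div_div_div_same_aux {a b c : ℝ} (hc : c ≠ 0) : (a / c) / (b / c) = a / b := by
  rcases eq_or_ne b 0 with hb | hb
  · simp [hb]
  · field_simp

/-- If `2 r_n / n → ρ > 0` then for every fixed `k`,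
`p_{n,r_n}(k) → (k+1)·(ρ/(1+ρ))²·(1/(1+ρ))^k`; that is, the degree plus one
converges in distribution to a size-biased geometric variable with parameter
`ρ/(1+ρ)`. -/
theorem degree_tendsto_sizeBiased_geometric (r : ℕ → ℝ) (hr : ∀ n, 0 < r n)
    (ρ : ℝ) (hρ : 0 < ρ)
    (h : Tendsto (fun n => 2 * r n / (n : ℝ)) atTop (nhds ρ)) (k : ℕ) :
    Tendsto (fun n => splitDriftPMF n (r n) k) atTop
      (nhds (((k : ℝ) + 1) * (ρ / (1 + ρ)) ^ 2 * (1 / (1 + ρ)) ^ k)) := by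
  have hρ1 : (0:ℝ) < 1 + ρ := by linarith
  have hu : Tendsto (fun n : ℕ => 1 / (n : ℝ)) atTop (nhds 0) :=
    tendsto_one_div_atTop_nhds_zero_nat
  -- the rescaled sequence
  set t : ℕ → ℝ := fun n => 2 * r n / (n : ℝ) with ht
  have hg : Tendsto (fun n : ℕ =>
      (t n * (t n + 1 / (n : ℝ))) / ((1 + t n) * (1 - 1 / (n : ℝ) + t n)) * ((k : ℝ) + 1) *
        ∏ i ∈ Finset.Icc 1 k,
          ((1 - (i : ℝ) * (1 / (n : ℝ))) / (1 - (i : ℝ) * (1 / (n : ℝ)) + t n - 1 / (n : ℝ))))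
      atTop
      (nhds ((ρ * (ρ + 0)) / ((1 + ρ) * (1 - 0 + ρ)) * ((k : ℝ) + 1) *
        ∏ i ∈ Finset.Icc 1 k, ((1 - (i : ℝ) * 0) / (1 - (i : ℝ) * 0 + ρ - 0)))) := by
    refine Tendsto.mul (Tendsto.mul ?_ tendsto_const_nhds) ?_
    · refine Tendsto.div (h.mul (h.add hu))
        ((tendsto_const_nhds.add h).mul ((tendsto_const_nhds.sub hu).add h)) ?_
      have : (1 + ρ) * (1 - 0 + ρ) > 0 := by nlinarith
      exact ne_of_gt this
    · refine tendsto_finset_prod _ (fun i _ => ?_)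
      refine Tendsto.div (tendsto_const_nhds.sub (hu.const_mul _))
        (((tendsto_const_nhds.sub (hu.const_mul _)).add h).sub hu) ?_
      have : (1:ℝ) - (i : ℝ) * 0 + ρ - 0 > 0 := by simp; linarith
      exact ne_of_gt this
  have hval : (ρ * (ρ + 0)) / ((1 + ρ) * (1 - 0 + ρ)) * ((k : ℝ) + 1) *
      ∏ i ∈ Finset.Icc 1 k, ((1 - (i : ℝ) * 0) / (1 - (i : ℝ) * 0 + ρ - 0))
      = ((k : ℝ) + 1) * (ρ / (1 + ρ)) ^ 2 * (1 / (1 + ρ)) ^ k := by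
    simp only [mul_zero, sub_zero, add_zero]
    rw [Finset.prod_const, Nat.card_Icc]
    simp only [Nat.add_sub_cancel]
    field_simp
  rw [hval] at hg
  refine hg.congr' ?_
  filter_upwards [eventually_ge_atTop (k + 1)] with n hn
  have hk : k < n := hn
  have hn1 : 1 ≤ n := le_trans (Nat.succ_le_succ (Nat.zero_le k)) hn
  have hn0 : (0:ℝ) < (n : ℝ) := by exact_mod_cast Nat.lt_of_lt_of_le (Nat.succ_pos k) hn
  have hne : ((n : ℝ)) ≠ 0 := ne_of_gt hn0
  rw [splitDriftPMF, if_pos hk]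
  have hA : (t n * (t n + 1 / (n : ℝ))) / ((1 + t n) * (1 - 1 / (n : ℝ) + t n))
      = 2 * r n * (2 * r n + 1) / (((n : ℝ) + 2 * r n) * ((n : ℝ) - 1 + 2 * r n)) := by
    have h1 : t n * (t n + 1 / (n : ℝ)) = (2 * r n * (2 * r n + 1)) / ((n : ℝ) * (n : ℝ)) := by
      rw [ht]; field_simp
    have h2 : (1 + t n) * (1 - 1 / (n : ℝ) + t n)
        = ((((n : ℝ) + 2 * r n) * ((n : ℝ) - 1 + 2 * r n))) / ((n : ℝ) * (n : ℝ)) := by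
      rw [ht]; field_simp
    rw [h1, h2, div_div_div_same_aux (by positivity)]
  have hP : ∀ i ∈ Finset.Icc 1 k,
      ((1 - (i : ℝ) * (1 / (n : ℝ))) / (1 - (i : ℝ) * (1 / (n : ℝ)) + t n - 1 / (n : ℝ)))
      = ((n : ℝ) - (i : ℝ)) / ((n : ℝ) - (i : ℝ) + 2 * r n - 1) := by
    intro i hi
    have h1 : (1 : ℝ) - (i : ℝ) * (1 / (n : ℝ)) = ((n : ℝ) - (i : ℝ)) / (n : ℝ) := by
      field_simp
    have h2 : (1 : ℝ) - (i : ℝ) * (1 / (n : ℝ)) + t n - 1 / (n : ℝ)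
        = ((n : ℝ) - (i : ℝ) + 2 * r n - 1) / (n : ℝ) := by
      rw [ht]; field_simp
    rw [h2, h1, div_div_div_same_aux hne]
  rw [hA, Finset.prod_congr rfl hP]
end

section
/- Let (r_n) be a sequence of positive real numbers with r_n → r for some r > 0. Then for every x ∈ [0,1), the rescaled degree density f_n(x) := n · p_{n,r_n}(⌊nx⌋) converges, as n → ∞, to 2r(2r+1) · x · (1−x)^{2r−1}, which is the probability density function of the Beta(2, 2r) distribution. -/
open Filter Finset

namespace SplitDriftAux

lemma sum_Icc_one (k : ℕ) (f : ℕ → ℝ) :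
    ∑ i ∈ Icc 1 k, f i = ∑ j ∈ range k, f (1 + j) := by
  rw [← Finset.Ico_add_one_right_eq_Icc, Finset.sum_Ico_eq_sum_range]
  simp

lemma tendsto_atTop_add_conv (f g : ℕ → ℝ) (C : ℝ) (hf : Tendsto f atTop atTop)
    (hg : Tendsto g atTop (nhds C)) : Tendsto (fun n => f n + g n) atTop atTop := by
  apply tendsto_atTop_mono' atTop (f₁ := fun n => f n + (C - 1))
  · filter_upwards [hg.eventually (eventually_ge_nhds (by linarith : C - 1 < C))] with n hn
    linarith
  · exact tendsto_atTop_add_const_right _ _ hf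

lemma log_add_one_sub_log_le {m : ℝ} (hm : 0 < m) :
    Real.log (m + 1) - Real.log m ≤ m⁻¹ := by
  have h := Real.log_le_sub_one_of_pos (show (0:ℝ) < (m + 1) / m by positivity)
  rw [Real.log_div (by positivity) hm.ne'] at h
  have h2 : (m + 1) / m - 1 = m⁻¹ := by field_simp; ring
  linarith

lemma inv_le_log_sub {m : ℝ} (hm : 0 < m) :
    (m + 1)⁻¹ ≤ Real.log (m + 1) - Real.log m := by
  have h := Real.log_le_sub_one_of_pos (show (0:ℝ) < m / (m + 1) by positivity)
  rw [Real.log_div hm.ne' (by positivity)] at h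
  have h2 : m / (m + 1) - 1 = -(m + 1)⁻¹ := by field_simp; ring
  linarith

lemma abs_log_term_le {m c : ℝ} (hm : 0 < m) (hmc : 0 < m + c) :
    |Real.log m - Real.log (m + c) + c / m| ≤ c ^ 2 / (m * (m + c)) := by
  have ht : -1 < c / m := by rw [lt_div_iff₀ hm]; linarith
  have hpos : (0:ℝ) < 1 + c / m := by linarith
  have h1 : Real.log (m + c) = Real.log m + Real.log (1 + c / m) := by
    rw [← Real.log_mul hm.ne' hpos.ne']
    congr 1
    field_simp
  have expr : Real.log m - Real.log (m + c) + c / m = c / m - Real.log (1 + c / m) := by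
    rw [h1]; ring
  rw [expr]
  have hle : Real.log (1 + c / m) ≤ c / m := by
    have := Real.log_le_sub_one_of_pos hpos
    linarith
  have hge : c / m / (1 + c / m) ≤ Real.log (1 + c / m) := by
    have h := Real.log_le_sub_one_of_pos (inv_pos.mpr hpos)
    rw [Real.log_inv] at h
    have h2 : c / m / (1 + c / m) = 1 - (1 + c / m)⁻¹ := by field_simp; ring
    have h3 : 1 - (1 + c / m)⁻¹ ≤ Real.log (1 + c / m) := by linarith
    linarith [h2.le, h2.ge]
  rw [abs_of_nonneg (by linarith)]
  have h4 : c / m - Real.log (1 + c / m) ≤ c / m - c / m / (1 + c / m) := by linarith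
  have h5 : c / m - c / m / (1 + c / m) = c ^ 2 / (m * (m + c)) := by
    field_simp
    ring
  linarith

lemma tendsto_nat_div_add (a : ℕ → ℝ) (A : ℝ) (ha : Tendsto a atTop (nhds A)) :
    Tendsto (fun n : ℕ => (n : ℝ) / ((n : ℝ) + a n)) atTop (nhds 1) := by
  have h0 : Tendsto (fun n : ℕ => a n / n) atTop (nhds 0) := by
    have := ha.mul (tendsto_inv_atTop_zero.comp (tendsto_natCast_atTop_atTop (R := ℝ)))
    simpa [div_eq_mul_inv] using this
  have h1 : Tendsto (fun n : ℕ => 1 + a n / n) atTop (nhds 1) := by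
    simpa using tendsto_const_nhds.add h0
  have h2 := h1.inv₀ (by norm_num)
  rw [inv_one] at h2
  apply h2.congr'
  have hb : Tendsto (fun n : ℕ => (n : ℝ) + a n) atTop atTop :=
    tendsto_atTop_add_conv _ _ A (tendsto_natCast_atTop_atTop) ha
  filter_upwards [hb.eventually_gt_atTop 0, eventually_gt_atTop 0] with n hn hn0
  have hn0' : (0:ℝ) < n := by exact_mod_cast hn0
  have e1 : 1 + a n / n = ((n : ℝ) + a n) / n := by field_simp
  rw [e1, inv_div]

lemma telescope_lower (n kn : ℕ) (hk : kn < n) :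
    Real.log (n : ℝ) - Real.log ((n : ℝ) - kn) ≤ ∑ i ∈ Icc 1 kn, ((n : ℝ) - i)⁻¹ := by
  rw [sum_Icc_one]
  have key : Real.log (n : ℝ) - Real.log ((n : ℝ) - kn) =
      ∑ j ∈ range kn, (Real.log ((n : ℝ) - j) - Real.log ((n : ℝ) - (j + 1 : ℕ))) := by
    rw [Finset.sum_range_sub' (fun j => Real.log ((n : ℝ) - j)) kn]
    norm_num
  rw [key]
  apply Finset.sum_le_sum
  intro j hj
  rw [Finset.mem_range] at hj
  have hj1 : (j : ℝ) + 1 ≤ kn := by exact_mod_cast hj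
  have hkn : (kn : ℝ) ≤ (n : ℝ) - 1 := by
    have : kn + 1 ≤ n := hk
    have := (Nat.cast_le (α := ℝ)).mpr this
    push_cast at this
    linarith
  have hm : (0:ℝ) < (n : ℝ) - (j + 1) := by linarith
  have := log_add_one_sub_log_le hm
  have e1 : (n : ℝ) - (j + 1) + 1 = (n : ℝ) - j := by ring
  rw [e1] at this
  push_cast
  calc Real.log ((n:ℝ) - j) - Real.log ((n:ℝ) - (j + 1)) ≤ ((n:ℝ) - (j+1))⁻¹ := this
    _ = ((n:ℝ) - (1 + j))⁻¹ := by ring_nf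

lemma telescope_upper (n kn : ℕ) (hk : kn + 1 < n) :
    ∑ i ∈ Icc 1 kn, ((n : ℝ) - i)⁻¹ ≤ Real.log ((n : ℝ) - 1) - Real.log ((n : ℝ) - kn - 1) := by
  rw [sum_Icc_one]
  have key : Real.log ((n : ℝ) - 1) - Real.log ((n : ℝ) - kn - 1) =
      ∑ j ∈ range kn, (Real.log ((n : ℝ) - 1 - j) - Real.log ((n : ℝ) - 1 - (j + 1 : ℕ))) := by
    rw [Finset.sum_range_sub' (fun j => Real.log ((n : ℝ) - 1 - j)) kn]
    norm_num [sub_sub]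
    ring_nf
  rw [key]
  apply Finset.sum_le_sum
  intro j hj
  rw [Finset.mem_range] at hj
  have hj1 : (j : ℝ) + 1 ≤ kn := by exact_mod_cast hj
  have hkn : (kn : ℝ) + 2 ≤ (n : ℝ) := by
    have : kn + 2 ≤ n := hk
    exact_mod_cast this
  have hm : (0:ℝ) < (n : ℝ) - 1 - (j + 1) := by linarith
  have := inv_le_log_sub hm
  have e1 : (n : ℝ) - 1 - (j + 1) + 1 = (n : ℝ) - 1 - j := by ring
  rw [e1] at this
  push_cast
  calc ((n:ℝ) - (1 + j))⁻¹ = ((n:ℝ) - 1 - (j+1) + 1)⁻¹ := by ring_nf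
    _ ≤ Real.log ((n:ℝ) - 1 - j) - Real.log ((n:ℝ) - 1 - (j + 1)) := by rw [e1]; exact this

end SplitDriftAux

open SplitDriftAux in
/-- If `r_n → r > 0`, then for every `x ∈ [0,1)` the rescaled degree density
`f_n(x) = n · p_{n,r_n}(⌊nx⌋)` converges to `2r(2r+1) x (1-x)^{2r-1}`, the density
of the Beta(2, 2r) distribution. -/
theorem rescaled_degree_density_tendsto_beta (r : ℕ → ℝ) (hr : ∀ n, 0 < r n)
    (l : ℝ) (hl : 0 < l) (h : Tendsto r atTop (nhds l))
    (x : ℝ) (hx : x ∈ Set.Ico (0 : ℝ) 1) :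
    Tendsto (fun n : ℕ => (n : ℝ) * splitDriftPMF n (r n) ⌊(n : ℝ) * x⌋₊)
      atTop (nhds (2 * l * (2 * l + 1) * x * (1 - x) ^ (2 * l - 1))) := by
  obtain ⟨hx0, hx1⟩ := hx
  set c : ℕ → ℝ := fun n => 2 * r n - 1 with hc_def
  have hc_gt : ∀ n, -1 < c n := fun n => by
    have := hr n; simp only [hc_def]; linarith
  have hc_lim : Tendsto c atTop (nhds (2 * l - 1)) := (h.const_mul 2).sub_const 1
  set k : ℕ → ℕ := fun n => ⌊(n : ℝ) * x⌋₊ with hk_def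
  have hk_le : ∀ n, (k n : ℝ) ≤ (n : ℝ) * x := fun n => Nat.floor_le (by positivity)
  have hk_lt : ∀ n, 1 ≤ n → k n < n := by
    intro n hn
    have hn' : (0:ℝ) < n := by exact_mod_cast hn
    refine (Nat.floor_lt (by positivity)).mpr ?_
    nlinarith
  have hkdiv : Tendsto (fun n : ℕ => (k n : ℝ) / n) atTop (nhds x) := by
    have := (tendsto_nat_floor_mul_div_atTop hx0).comp (tendsto_natCast_atTop_atTop (R := ℝ))
    apply this.congr
    intro n
    simp only [Function.comp, hk_def, mul_comm]
  set d : ℕ → ℝ := fun n => (n : ℝ) - k n with hd_def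
  have hd_top : Tendsto d atTop atTop := by
    apply tendsto_atTop_mono' atTop (f₁ := fun n : ℕ => (n : ℝ) * (1 - x))
    · filter_upwards with n
      have h1 := hk_le n
      simp only [hd_def]
      nlinarith
    · exact Tendsto.atTop_mul_const (by linarith) tendsto_natCast_atTop_atTop
  have hddiv : Tendsto (fun n : ℕ => d n / n) atTop (nhds (1 - x)) := by
    have h1 : Tendsto (fun n : ℕ => 1 - (k n : ℝ) / n) atTop (nhds (1 - x)) :=
      tendsto_const_nhds.sub hkdiv
    apply h1.congr'
    filter_upwards [eventually_ge_atTop 1] with n hn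
    have hn' : (n:ℝ) ≠ 0 := by
      have : (0:ℝ) < n := by exact_mod_cast hn
      linarith
    simp only [hd_def]
    field_simp
  -- the three main sequences
  set P : ℕ → ℝ := fun n => ∏ i ∈ Icc 1 (k n), (((n : ℝ) - i) / ((n : ℝ) - i + c n)) with hP_def
  set S : ℕ → ℝ := fun n => ∑ i ∈ Icc 1 (k n), ((n : ℝ) - i)⁻¹ with hS_def
  set T : ℕ → ℝ := fun n =>
    ∑ i ∈ Icc 1 (k n), (Real.log ((n : ℝ) - i) - Real.log ((n : ℝ) - i + c n)) with hT_def
  -- pointwise positivity facts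
  have facts : ∀ n, k n < n → ∀ i ∈ Icc 1 (k n),
      (0:ℝ) < (n : ℝ) - i ∧ (0:ℝ) < (n : ℝ) - i + c n := by
    intro n hkn i hi
    rw [mem_Icc] at hi
    have h1 : (i : ℝ) ≤ k n := by exact_mod_cast hi.2
    have h2 : (k n : ℝ) + 1 ≤ n := by exact_mod_cast hkn
    have h3 := hc_gt n
    constructor <;> linarith
  -- P = exp T eventually
  have hPT : ∀ᶠ n in atTop, Real.exp (T n) = P n := by
    filter_upwards [eventually_ge_atTop 1] with n hn
    have hkn := hk_lt n hn
    simp only [hT_def, hP_def]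
    rw [Real.exp_sum]
    apply Finset.prod_congr rfl
    intro i hi
    obtain ⟨h1, h2⟩ := facts n hkn i hi
    rw [← Real.log_div h1.ne' h2.ne', Real.exp_log (div_pos h1 h2)]
  -- limit of S
  have hS_lim : Tendsto S atTop (nhds (-Real.log (1 - x))) := by
    have hlog : Tendsto (fun n : ℕ => -Real.log (d n / n)) atTop (nhds (-Real.log (1 - x))) :=
      (((Real.continuousAt_log (by linarith)).tendsto).comp hddiv).neg
    have hlow : Tendsto (fun n : ℕ => Real.log (n : ℝ) - Real.log (d n)) atTop
        (nhds (-Real.log (1 - x))) := by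
      apply hlog.congr'
      filter_upwards [hd_top.eventually_ge_atTop 1, eventually_ge_atTop 1] with n hd1 hn1
      have hn' : (0:ℝ) < n := by exact_mod_cast hn1
      rw [Real.log_div (by linarith) hn'.ne']
      ring
    have he : Tendsto (fun n : ℕ => (d n - 1) / ((n : ℝ) - 1)) atTop (nhds (1 - x)) := by
      have hinv : Tendsto (fun n : ℕ => ((n:ℝ))⁻¹) atTop (nhds 0) :=
        tendsto_inv_atTop_zero.comp (tendsto_natCast_atTop_atTop (R := ℝ))
      have hnum : Tendsto (fun n : ℕ => d n / n - ((n:ℝ))⁻¹) atTop (nhds (1 - x - 0)) :=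
        hddiv.sub hinv
      have hden : Tendsto (fun n : ℕ => 1 - ((n:ℝ))⁻¹) atTop (nhds (1 - 0)) :=
        tendsto_const_nhds.sub hinv
      rw [sub_zero] at hnum hden
      have := hnum.div hden (by norm_num)
      rw [div_one] at this
      apply this.congr'
      filter_upwards [eventually_ge_atTop 2] with n hn2
      have hn' : (2:ℝ) ≤ n := by exact_mod_cast hn2
      have h0 : (n:ℝ) ≠ 0 := by linarith
      have h1 : (n:ℝ) - 1 ≠ 0 := by linarith
      rw [Pi.div_apply]
      field_simp
      try ring
    have hup : Tendsto (fun n : ℕ => Real.log ((n : ℝ) - 1) - Real.log (d n - 1)) atTop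
        (nhds (-Real.log (1 - x))) := by
      have hlog2 : Tendsto (fun n : ℕ => -Real.log ((d n - 1) / ((n:ℝ) - 1))) atTop
          (nhds (-Real.log (1 - x))) :=
        (((Real.continuousAt_log (by linarith)).tendsto).comp he).neg
      apply hlog2.congr'
      filter_upwards [hd_top.eventually_ge_atTop 3, eventually_ge_atTop 2] with n hd3 hn2
      have hn' : (2:ℝ) ≤ n := by exact_mod_cast hn2
      rw [Real.log_div (by linarith) (by linarith)]
      ring
    apply tendsto_of_tendsto_of_tendsto_of_le_of_le' hlow hup
    · filter_upwards [eventually_ge_atTop 1] with n hn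
      have hkn := hk_lt n hn
      exact telescope_lower n (k n) hkn
    · filter_upwards [hd_top.eventually_ge_atTop 3] with n hd3
      have hkn2 : k n + 1 < n := by
        have : (k n : ℝ) + 3 ≤ n := by simp only [hd_def] at hd3; linarith
        have h2 : (k n : ℝ) + 2 ≤ (n:ℝ) := by linarith
        have h3 : k n + 2 ≤ n := by exact_mod_cast h2
        omega
      have := telescope_upper n (k n) hkn2
      simp only [hd_def]
      calc S n ≤ Real.log ((n:ℝ) - 1) - Real.log ((n:ℝ) - k n - 1) := this
        _ = Real.log ((n:ℝ) - 1) - Real.log ((n:ℝ) - (k n : ℝ) - 1) := rfl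
  -- limit of E := T + c * S
  have hE_lim : Tendsto (fun n => T n + c n * S n) atTop (nhds 0) := by
    have hdc_top : Tendsto (fun n => d n + c n) atTop atTop :=
      tendsto_atTop_add_conv d c (2 * l - 1) hd_top hc_lim
    have hbound0 : Tendsto (fun n => (k n : ℝ) * ((c n) ^ 2 / (d n * (d n + c n)))) atTop
        (nhds 0) := by
      have h1 : Tendsto (fun n : ℕ => ((k n : ℝ) / n) * (c n) ^ 2 * (d n / n)⁻¹ *
          (d n + c n)⁻¹) atTop (nhds (x * (2 * l - 1) ^ 2 * (1 - x)⁻¹ * 0)) := by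
        exact ((hkdiv.mul (hc_lim.pow 2)).mul (hddiv.inv₀ (by linarith))).mul
          (tendsto_inv_atTop_zero.comp hdc_top)
      rw [mul_zero] at h1
      apply h1.congr'
      filter_upwards [eventually_ge_atTop 1, hd_top.eventually_ge_atTop 3,
        hdc_top.eventually_ge_atTop 1] with n hn1 hd3 hdc1
      have hn' : (0:ℝ) < n := by exact_mod_cast hn1
      have hd' : (0:ℝ) < d n := by linarith
      have hdc' : (0:ℝ) < d n + c n := by linarith
      field_simp
      try ring
    apply squeeze_zero_norm' _ hbound0
    filter_upwards [eventually_ge_atTop 1, hd_top.eventually_ge_atTop 3] with n hn1 hd3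
    have hkn := hk_lt n hn1
    have hd' : (0:ℝ) < d n := by linarith
    have hdc' : (0:ℝ) < d n + c n := by
      have := hc_gt n; linarith
    have heq : T n + c n * S n =
        ∑ i ∈ Icc 1 (k n),
          ((Real.log ((n : ℝ) - i) - Real.log ((n : ℝ) - i + c n)) + c n * ((n:ℝ) - i)⁻¹) := by
      simp only [hT_def, hS_def, Finset.mul_sum, Finset.sum_add_distrib]
    rw [Real.norm_eq_abs, heq]
    calc |∑ i ∈ Icc 1 (k n), ((Real.log ((n : ℝ) - i) - Real.log ((n : ℝ) - i + c n)) +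
          c n * ((n:ℝ) - i)⁻¹)|
        ≤ ∑ i ∈ Icc 1 (k n), |(Real.log ((n : ℝ) - i) - Real.log ((n : ℝ) - i + c n)) +
          c n * ((n:ℝ) - i)⁻¹| := Finset.abs_sum_le_sum_abs _ _
      _ ≤ ∑ _i ∈ Icc 1 (k n), (c n) ^ 2 / (d n * (d n + c n)) := by
          apply Finset.sum_le_sum
          intro i hi
          obtain ⟨h1, h2⟩ := facts n hkn i hi
          have hterm := abs_log_term_le h1 h2
          have e1 : c n * ((n:ℝ) - i)⁻¹ = c n / ((n:ℝ) - i) := (div_eq_mul_inv _ _).symm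
          rw [e1]
          refine hterm.trans ?_
          apply div_le_div_of_nonneg_left (sq_nonneg _) (by positivity)
          have hdm : d n ≤ (n:ℝ) - i := by
            rw [mem_Icc] at hi
            have : (i : ℝ) ≤ k n := by exact_mod_cast hi.2
            simp only [hd_def]
            linarith
          have : d n + c n ≤ (n:ℝ) - i + c n := by linarith
          nlinarith
      _ = (k n : ℝ) * ((c n) ^ 2 / (d n * (d n + c n))) := by
          rw [Finset.sum_const, Nat.card_Icc]
          simp [nsmul_eq_mul]
  -- limit of T
  have hT_lim : Tendsto T atTop (nhds ((2 * l - 1) * Real.log (1 - x))) := by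
    have h1 := hE_lim.sub (hc_lim.mul hS_lim)
    have h2 : (0 : ℝ) - (2 * l - 1) * -Real.log (1 - x) = (2 * l - 1) * Real.log (1 - x) := by
      ring
    rw [h2] at h1
    apply h1.congr
    intro n
    ring
  -- limit of P
  have hP_lim : Tendsto P atTop (nhds ((1 - x) ^ (2 * l - 1))) := by
    have h1 : Tendsto (fun n => Real.exp (T n)) atTop
        (nhds (Real.exp ((2 * l - 1) * Real.log (1 - x)))) :=
      (Real.continuous_exp.tendsto _).comp hT_lim
    rw [Real.rpow_def_of_pos (by linarith : (0:ℝ) < 1 - x), mul_comm]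
    exact h1.congr' hPT
  -- prefactor limits
  have hA_lim : Tendsto (fun n => 2 * r n * (2 * r n + 1)) atTop
      (nhds (2 * l * (2 * l + 1))) :=
    (h.const_mul 2).mul ((h.const_mul 2).add_const 1)
  have hB_lim : Tendsto (fun n : ℕ => (n : ℝ) * ((k n : ℝ) + 1) /
      (((n : ℝ) + 2 * r n) * ((n : ℝ) - 1 + 2 * r n))) atTop (nhds x) := by
    have hinv : Tendsto (fun n : ℕ => ((n:ℝ))⁻¹) atTop (nhds 0) :=
      tendsto_inv_atTop_zero.comp (tendsto_natCast_atTop_atTop (R := ℝ))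
    have u1 : Tendsto (fun n : ℕ => ((k n : ℝ) + 1) / n) atTop (nhds x) := by
      have := hkdiv.add hinv
      rw [add_zero] at this
      apply this.congr'
      filter_upwards [eventually_ge_atTop 1] with n hn
      have hn' : (0:ℝ) < n := by exact_mod_cast hn
      field_simp
    have u2 : Tendsto (fun n : ℕ => (n : ℝ) / ((n : ℝ) + 2 * r n)) atTop (nhds 1) :=
      tendsto_nat_div_add (fun n => 2 * r n) (2 * l) (h.const_mul 2)
    have u3 : Tendsto (fun n : ℕ => (n : ℝ) / ((n : ℝ) + c n)) atTop (nhds 1) :=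
      tendsto_nat_div_add c (2 * l - 1) hc_lim
    have htot := (u1.mul u2).mul u3
    rw [mul_one, mul_one] at htot
    apply htot.congr'
    have hna : Tendsto (fun n : ℕ => (n : ℝ) + 2 * r n) atTop atTop :=
      tendsto_atTop_add_conv _ _ (2 * l) tendsto_natCast_atTop_atTop (h.const_mul 2)
    have hnc : Tendsto (fun n : ℕ => (n : ℝ) + c n) atTop atTop :=
      tendsto_atTop_add_conv _ _ (2 * l - 1) tendsto_natCast_atTop_atTop hc_lim
    filter_upwards [eventually_ge_atTop 1, hna.eventually_gt_atTop 0,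
      hnc.eventually_gt_atTop 0] with n hn1 ha0 hc0
    have hn' : (0:ℝ) < n := by exact_mod_cast hn1
    have e1 : (n : ℝ) - 1 + 2 * r n = (n : ℝ) + c n := by simp only [hc_def]; ring
    rw [e1]
    field_simp
  -- assemble
  have hfinal := (hA_lim.mul hB_lim).mul hP_lim
  apply hfinal.congr'
  filter_upwards [eventually_ge_atTop 1] with n hn
  have hkn := hk_lt n hn
  have hprod : ∏ i ∈ Finset.Icc 1 (k n),
      (((n : ℝ) - (i : ℝ)) / ((n : ℝ) - (i : ℝ) + 2 * r n - 1)) = P n := by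
    simp only [hP_def]
    apply Finset.prod_congr rfl
    intro i _
    congr 1
    simp only [hc_def]
    ring
  show 2 * r n * (2 * r n + 1) * ((n : ℝ) * ((k n : ℝ) + 1) /
      (((n : ℝ) + 2 * r n) * ((n : ℝ) - 1 + 2 * r n))) * P n
      = (n : ℝ) * splitDriftPMF n (r n) (k n)
  rw [splitDriftPMF, if_pos hkn, hprod]
  ring
end

section
/- Let (r_n) be a sequence of positive real numbers with r_n → r for some r > 0. Then for every y ∈ [0,1], ∑_{k=0}^{⌊ny⌋} p_{n,r_n}(k) → ∫_0^y 2r(2r+1) x (1−x)^{2r−1} dx as n → ∞; that is, the rescaled degree D_n/n converges in distribution to a Beta(2, 2r) random variable. -/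
open Filter Finset

lemma log_ineq_aux (x a : ℝ) (hx : 1 ≤ x) (ha : -1 < a) :
    |Real.log x - Real.log (x+a) + a/x| ≤ a^2/(x*(x+a)) := by
  have hx0 : 0 < x := by linarith
  have hxa : 0 < x + a := by nlinarith
  set u : ℝ := a / x with hu
  have hu1 : 0 < 1 + u := by
    rw [hu]
    have : 1 + a/x = (x+a)/x := by field_simp
    rw [this]; positivity
  have hlog : Real.log (x+a) - Real.log x = Real.log (1+u) := by
    rw [hu, ← Real.log_div (by positivity) (ne_of_gt hx0)]
    congr 1
    field_simp
  have hle : Real.log (1+u) ≤ u := by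
    have := Real.log_le_sub_one_of_pos hu1
    linarith
  have hge : u/(1+u) ≤ Real.log (1+u) := by
    have h2 := Real.log_le_sub_one_of_pos (show (0:ℝ) < (1+u)⁻¹ by positivity)
    rw [Real.log_inv] at h2
    have h3 : (1+u)⁻¹ - 1 = -(u/(1+u)) := by field_simp; ring
    rw [h3] at h2
    linarith
  have heq : Real.log x - Real.log (x+a) + a/x = u - Real.log (1+u) := by
    rw [← hlog]; ring
  rw [heq]
  have hb : u - Real.log (1+u) ≤ u^2/(1+u) := by
    have : u - u/(1+u) = u^2/(1+u) := by field_simp; ring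
    linarith
  have hnn : 0 ≤ u - Real.log (1+u) := by linarith
  have hfin : u^2/(1+u) = a^2/(x*(x+a)) := by
    rw [hu]
    field_simp
  rw [abs_of_nonneg hnn, ← hfin]
  exact hb

lemma tendsto_floor_mul_div (y : ℝ) (hy0 : 0 ≤ y) :
    Filter.Tendsto (fun n : ℕ => (⌊(n:ℝ)*y⌋₊ : ℝ)/n) atTop (nhds y) := by
  have hinv : Filter.Tendsto (fun n : ℕ => ((n:ℝ))⁻¹) atTop (nhds 0) :=
    tendsto_inv_atTop_zero.comp tendsto_natCast_atTop_atTop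
  apply tendsto_of_tendsto_of_tendsto_of_le_of_le' (g := fun n : ℕ => y - ((n:ℝ))⁻¹)
    (h := fun _ : ℕ => y)
  · simpa using (tendsto_const_nhds.sub hinv)
  · exact tendsto_const_nhds
  · filter_upwards [Filter.eventually_ge_atTop 1] with n hn
    have hn0 : (0:ℝ) < (n:ℝ) := by exact_mod_cast hn
    have h1 : (n:ℝ)*y - 1 < (⌊(n:ℝ)*y⌋₊ : ℝ) := Nat.sub_one_lt_floor _
    rw [le_div_iff₀ hn0]
    have h2 : (n:ℝ)⁻¹ * n = 1 := inv_mul_cancel₀ (ne_of_gt hn0)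
    nlinarith
  · filter_upwards [Filter.eventually_ge_atTop 1] with n hn
    have hn0 : (0:ℝ) < (n:ℝ) := by exact_mod_cast hn
    have h1 : (⌊(n:ℝ)*y⌋₊ : ℝ) ≤ (n:ℝ)*y := Nat.floor_le (by positivity)
    rw [div_le_iff₀ hn0]
    nlinarith

lemma sdp_closed_form (n : ℕ) (r : ℝ) (hr : 0 < r) :
    ∀ m : ℕ, m + 2 ≤ n →
    ∑ k ∈ Finset.range (m+1), splitDriftPMF n r k
      = 1 - ((n:ℝ) + 2*r - 2 - m) * (2*r*m + n + 4*r) *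
          (∏ i ∈ Finset.Icc 1 (m+1), (((n:ℝ) - i) / ((n:ℝ) - i + 2*r - 1)))
          / (((n:ℝ) + 2*r) * ((n:ℝ) + 2*r - 1)) := by
  intro m
  induction m with
  | zero =>
    intro hn
    have hn2 : (2:ℝ) ≤ (n:ℝ) := by exact_mod_cast hn
    have h1 : ((n:ℝ) + 2*r) ≠ 0 := by positivity
    have h2 : ((n:ℝ) + 2*r - 1) ≠ 0 := by nlinarith
    have h3 : ((n:ℝ) - 1 + 2*r - 1) ≠ 0 := by nlinarith
    rw [Finset.sum_range_one]
    rw [splitDriftPMF, if_pos (by omega)]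
    rw [show (0:ℕ)+1 = 1 from rfl, Finset.Icc_self, Finset.prod_singleton,
      Finset.Icc_eq_empty (by norm_num), Finset.prod_empty]
    push_cast
    have key : ((n:ℝ) + 2*r - 2 - 0) * (2*r*0 + n + 4*r) *
        (((n:ℝ) - 1) / ((n:ℝ) - 1 + 2*r - 1))
        = ((n:ℝ)+2*r)*((n:ℝ)+2*r-1) - 2*r*(2*r+1) := by
      rw [mul_div_assoc', div_eq_iff h3]
      ring
    linear_combination key / (((n:ℝ)+2*r)*((n:ℝ)+2*r-1))
      + mul_div_cancel_left₀ (1:ℝ) (mul_ne_zero h1 h2)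
  | succ m ih =>
    intro hn
    have hmn : m + 2 ≤ n := by omega
    have hn2 : ((m:ℝ) + 3) ≤ (n:ℝ) := by exact_mod_cast hn
    have h1 : ((n:ℝ) + 2*r) ≠ 0 := by positivity
    have hv : ((n:ℝ) - ((m:ℝ)+1+1) + 2*r - 1) ≠ 0 := by nlinarith
    rw [Finset.sum_range_succ, ih hmn]
    rw [splitDriftPMF, if_pos (by omega)]
    conv_rhs => rw [show m+1+1 = (m+1)+1 from rfl,
      Finset.prod_Icc_succ_top (by omega : 1 ≤ (m+1)+1)]
    push_cast
    set P : ℝ := ∏ i ∈ Finset.Icc 1 (m+1), (((n:ℝ) - i) / ((n:ℝ) - i + 2*r - 1)) with hP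
    have key : ((n:ℝ) + 2*r - 2 - m) * (2*r*m + n + 4*r) * P
        - ((n:ℝ) + 2*r - 2 - ((m:ℝ)+1)) * (2*r*((m:ℝ)+1) + n + 4*r) *
          (P * (((n:ℝ) - ((m:ℝ)+1+1)) / ((n:ℝ) - ((m:ℝ)+1+1) + 2*r - 1)))
        = 2*r*(2*r+1)*(((m:ℝ)+1)+1) * P := by
      field_simp
      ring
    linear_combination (-1/(((n:ℝ)+2*r)*((n:ℝ)+2*r-1))) * key

lemma sdp_sum_all (n : ℕ) (hn : 1 ≤ n) (r : ℝ) (hr : 0 < r) (M : ℕ) (hM : n ≤ M + 1) :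
    ∑ k ∈ Finset.range (M+1), splitDriftPMF n r k = 1 := by
  have hsub : ∑ k ∈ Finset.range (M+1), splitDriftPMF n r k
      = ∑ k ∈ Finset.range n, splitDriftPMF n r k := by
    rw [← Finset.sum_subset (Finset.range_subset_range.2 hM)]
    intro x _ hx
    rw [splitDriftPMF, if_neg (by simp at hx ⊢; omega)]
  rw [hsub]
  rcases Nat.lt_or_ge n 2 with h2 | h2
  · -- n = 1
    have hn1 : n = 1 := by omega
    subst hn1
    rw [Finset.sum_range_one, splitDriftPMF, if_pos (by omega),
      Finset.Icc_eq_empty (by norm_num), Finset.prod_empty]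
    push_cast
    have h1 : (1:ℝ) + 2*r ≠ 0 := by positivity
    field_simp
    ring
  · -- n ≥ 2
    obtain ⟨m, rfl⟩ : ∃ m, n = m + 2 := ⟨n - 2, by omega⟩
    have hrw : m + 2 = (m + 1) + 1 := rfl
    rw [hrw, Finset.sum_range_succ, sdp_closed_form _ r hr m (le_refl _)]
    rw [splitDriftPMF, if_pos (by omega)]
    have hn2 : (2:ℝ) ≤ ((m:ℝ) + 2) := by nlinarith [Nat.cast_nonneg (α := ℝ) m]
    have hcast : ((m + 2 : ℕ) : ℝ) = (m:ℝ) + 2 := by push_cast; ring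
    rw [hcast]
    have h1 : ((m:ℝ) + 2 + 2*r) ≠ 0 := by positivity
    have h2' : ((m:ℝ) + 2 + 2*r - 1) ≠ 0 := by nlinarith [Nat.cast_nonneg (α := ℝ) m]
    set P : ℝ := ∏ i ∈ Finset.Icc 1 (m+1), ((((m:ℝ)+2) - i) / (((m:ℝ)+2) - i + 2*r - 1)) with hP
    push_cast
    linear_combination (((m:ℝ)+2+2*r-2-m) * (2*r*m+((m:ℝ)+2)+4*r) * P
        - 2*r*(2*r+1)*((m:ℝ)+1+1)*P) / ((((m:ℝ)+2)+2*r)*(((m:ℝ)+2)+2*r-1))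

lemma beta_integral_eval (l : ℝ) (hl : 0 < l) (y : ℝ) (hy0 : 0 ≤ y) (hy1 : y ≤ 1) :
    (∫ t in (0:ℝ)..y, 2 * l * (2 * l + 1) * t * (1 - t) ^ (2 * l - 1))
      = 1 - (1 + 2*l*y) * (1 - y) ^ (2*l) := by
  have hA : (-1:ℝ) < 2*l - 1 := by linarith
  have hA1 : (-1:ℝ) < 2*l := by linarith
  have key : (fun t : ℝ => 2 * l * (2 * l + 1) * t * (1 - t) ^ (2 * l - 1))
      = (fun t : ℝ => (fun x : ℝ => 2 * l * (2 * l + 1) * ((1 - x) * x ^ (2*l-1))) (1 - t)) := by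
    funext t
    simp only []
    ring_nf
  rw [key, intervalIntegral.integral_comp_sub_left
      (fun x : ℝ => 2 * l * (2 * l + 1) * ((1 - x) * x ^ (2*l-1))) 1]
  rw [show (1:ℝ) - 0 = 1 by norm_num]
  have hint1 : IntervalIntegrable (fun x : ℝ => x ^ (2*l-1)) MeasureTheory.volume (1-y) 1 :=
    intervalIntegral.intervalIntegrable_rpow' hA
  have hint2 : IntervalIntegrable (fun x : ℝ => x ^ (2*l)) MeasureTheory.volume (1-y) 1 :=
    intervalIntegral.intervalIntegrable_rpow' hA1
  have hsplit : ∀ x : ℝ, 0 ≤ x → (1 - x) * x ^ (2*l-1) = x ^ (2*l-1) - x ^ (2*l) := by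
    intro x hx
    rcases eq_or_lt_of_le hx with h | h
    · by_cases h0 : (2*l - 1 : ℝ) = 0
      · rw [h0, show (2*l:ℝ) = 2*l - 1 + 1 from by ring, h0]
        norm_num
      · rw [← h, Real.zero_rpow h0, Real.zero_rpow (by positivity)]
        ring
    · rw [show (2*l : ℝ) = (2*l-1) + 1 by ring, Real.rpow_add_one (ne_of_gt h)]
      ring
  have hcongr : (∫ x in (1-y)..1, 2 * l * (2 * l + 1) * ((1 - x) * x ^ (2*l-1)))
      = 2 * l * (2 * l + 1) * ((∫ x in (1-y)..1, x ^ (2*l-1)) - ∫ x in (1-y)..1, x ^ (2*l)) := by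
    rw [← intervalIntegral.integral_sub hint1 hint2, ← intervalIntegral.integral_const_mul]
    apply intervalIntegral.integral_congr
    intro x hx
    have hx0 : 0 ≤ x := by
      rcases hx with ⟨h1, h2⟩
      simp only [inf_le_iff, le_inf_iff] at *
      rcases h1 with h1 | h1 <;> linarith
    simp only [hsplit x hx0]
  rw [hcongr, integral_rpow (Or.inl hA), integral_rpow (Or.inl hA1)]
  rw [Real.one_rpow, Real.one_rpow]
  have e1 : (2*l - 1 + 1 : ℝ) = 2*l := by ring
  rw [e1]
  have h2l : (0:ℝ) < 2*l := by linarith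
  have e2 : (1 - y) ^ (2*l + 1 : ℝ) = (1-y) ^ (2*l : ℝ) * (1 - y) := by
    rcases eq_or_lt_of_le (by linarith : (0:ℝ) ≤ 1 - y) with h | h
    · rw [← h, Real.zero_rpow (by positivity), Real.zero_rpow (by positivity)]
      ring
    · rw [Real.rpow_add_one (ne_of_gt h)]
  rw [e2]
  have h2l1 : (2*l + 1 : ℝ) ≠ 0 := by positivity
  field_simp
  ring

lemma sdp_prod_tendsto (r : ℕ → ℝ) (hr : ∀ n, 0 < r n) (l : ℝ) (hl : 0 < l)
    (h : Filter.Tendsto r atTop (nhds l)) (y : ℝ) (hy0 : 0 ≤ y) (hy1 : y < 1) :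
    Filter.Tendsto
      (fun n : ℕ => ∏ i ∈ Finset.Icc 1 (⌊(n:ℝ)*y⌋₊ + 1),
        (((n:ℝ) - i) / ((n:ℝ) - i + 2*(r n) - 1)))
      atTop (nhds ((1-y) ^ (2*l-1))) := by
  set m : ℕ → ℕ := fun n => ⌊(n:ℝ)*y⌋₊ with hm
  set K : ℕ → ℕ := fun n => m n + 1 with hK
  set a : ℕ → ℝ := fun n => 2 * r n - 1 with ha
  have hA : Filter.Tendsto a atTop (nhds (2*l-1)) := by
    apply Filter.Tendsto.sub_const
    exact (tendsto_const_nhds.mul h)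
  have han : ∀ n, -1 < a n := fun n => by have := hr n; simp only [ha]; linarith
  have hinv : Filter.Tendsto (fun n : ℕ => ((n:ℝ))⁻¹) atTop (nhds 0) :=
    tendsto_inv_atTop_zero.comp tendsto_natCast_atTop_atTop
  have hφ : Filter.Tendsto (fun n : ℕ => ((m n : ℕ) : ℝ)/n) atTop (nhds y) :=
    tendsto_floor_mul_div y hy0
  -- the eventual condition : m n + 3 ≤ n
  have hW : ∀ᶠ n : ℕ in atTop, ((m n : ℝ) + 3 ≤ (n:ℝ)) := by
    have h3 : Filter.Tendsto (fun n : ℕ => (n:ℝ)*(1-y)) atTop atTop :=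
      Filter.Tendsto.atTop_mul_const (by linarith) tendsto_natCast_atTop_atTop
    filter_upwards [h3.eventually_ge_atTop 3] with n hn
    have hfl : ((m n : ℕ) : ℝ) ≤ (n:ℝ)*y := Nat.floor_le (by positivity)
    nlinarith
  -- basic limits
  have hKn : Filter.Tendsto (fun n : ℕ => ((n:ℝ) - (K n : ℕ))/n) atTop (nhds (1-y)) := by
    apply Filter.Tendsto.congr' _ (by simpa using ((tendsto_const_nhds.sub hφ).sub hinv))
    filter_upwards [Filter.eventually_ge_atTop 1] with n hn
    have hn0 : ((n:ℝ)) ≠ 0 := by positivity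
    simp only [hK]
    push_cast
    field_simp
    ring
  have hKn1 : Filter.Tendsto (fun n : ℕ => ((n:ℝ) - 1 - (K n : ℕ))/((n:ℝ)-1)) atTop (nhds (1-y)) := by
    have hlim : Filter.Tendsto (fun n : ℕ => (((n:ℝ) - (K n : ℕ))/n - ((n:ℝ))⁻¹)/(1 - ((n:ℝ))⁻¹))
        atTop (nhds ((1-y-0)/(1-0))) := by
      apply Filter.Tendsto.div (hKn.sub hinv) (tendsto_const_nhds.sub hinv)
      norm_num
    apply Filter.Tendsto.congr' _ (by simpa using hlim)
    filter_upwards [Filter.eventually_ge_atTop 2] with n hn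
    have hn0 : ((n:ℝ)) ≠ 0 := by positivity
    have hn2 : (2:ℝ) ≤ (n:ℝ) := by exact_mod_cast hn
    have hn1 : ((n:ℝ) - 1) ≠ 0 := by nlinarith
    field_simp
    ring
  -- the harmonic-type sum
  set S : ℕ → ℝ := fun n => ∑ i ∈ Finset.range (K n), 1/((n:ℝ)-1-i) with hSdef
  have hxlb : ∀ n : ℕ, ((m n : ℝ) + 3 ≤ (n:ℝ)) → ∀ i ∈ Finset.range (K n),
      (2:ℝ) ≤ (n:ℝ)-1-i := by
    intro n hn i hi
    simp only [Finset.mem_range, hK] at hi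
    have : (i:ℝ) ≤ (m n : ℝ) := by exact_mod_cast Nat.lt_succ_iff.mp hi
    linarith
  have hSlow : ∀ᶠ n : ℕ in atTop,
      Real.log (n:ℝ) - Real.log ((n:ℝ) - (K n : ℕ)) ≤ S n := by
    filter_upwards [hW] with n hn
    have htel : Real.log (n:ℝ) - Real.log ((n:ℝ) - (K n : ℕ))
        = ∑ i ∈ Finset.range (K n),
            (Real.log ((n:ℝ) - (i:ℕ)) - Real.log ((n:ℝ) - ((i+1 : ℕ):ℕ))) := by
      rw [Finset.sum_range_sub' (fun j : ℕ => Real.log ((n:ℝ) - (j:ℕ)))]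
      norm_num
    rw [htel]
    apply Finset.sum_le_sum
    intro i hi
    have hx2 := hxlb n hn i hi
    have hx0 : (0:ℝ) < (n:ℝ)-1-i := by linarith
    have hcast : ((i+1 : ℕ):ℝ) = (i:ℝ)+1 := by push_cast; ring
    rw [hcast]
    have heq1 : (n:ℝ) - ((i:ℝ)+1) = (n:ℝ)-1-i := by ring
    rw [heq1]
    have hlog := Real.log_le_sub_one_of_pos
      (div_pos (show (0:ℝ) < (n:ℝ)-(i:ℝ) by linarith) hx0)
    rw [Real.log_div (ne_of_gt (show (0:ℝ) < (n:ℝ)-(i:ℝ) by linarith)) (ne_of_gt hx0)] at hlog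
    have : ((n:ℝ)-(i:ℝ))/((n:ℝ)-1-i) - 1 = 1/((n:ℝ)-1-i) := by
      field_simp; ring
    linarith [this ▸ hlog]
  have hSup : ∀ᶠ n : ℕ in atTop,
      S n ≤ Real.log ((n:ℝ)-1) - Real.log ((n:ℝ)-1-(K n : ℕ)) := by
    filter_upwards [hW] with n hn
    have htel : Real.log ((n:ℝ)-1) - Real.log ((n:ℝ)-1-(K n : ℕ))
        = ∑ i ∈ Finset.range (K n),
            (Real.log ((n:ℝ)-1-(i:ℕ)) - Real.log ((n:ℝ)-1-((i+1 : ℕ):ℕ))) := by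
      rw [Finset.sum_range_sub' (fun j : ℕ => Real.log ((n:ℝ)-1-(j:ℕ)))]
      norm_num
    rw [htel]
    apply Finset.sum_le_sum
    intro i hi
    have hx2 := hxlb n hn i hi
    have hxK : ((i:ℝ)+1) ≤ (K n : ℝ) := by
      have : i+1 ≤ K n := Finset.mem_range.mp hi
      exact_mod_cast this
    have hmK : (K n : ℝ) = (m n : ℝ) + 1 := by simp [hK]
    have hx0 : (0:ℝ) < (n:ℝ)-1-i := by linarith
    have hx1 : (0:ℝ) < (n:ℝ)-1-((i:ℝ)+1) := by rw [hmK] at hxK; linarith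
    have hcast : ((i+1 : ℕ):ℝ) = (i:ℝ)+1 := by push_cast; ring
    rw [hcast]
    have hlog := Real.log_le_sub_one_of_pos
      (div_pos hx1 hx0)
    rw [Real.log_div (ne_of_gt hx1) (ne_of_gt hx0)] at hlog
    have heq2 : ((n:ℝ)-1-((i:ℝ)+1))/((n:ℝ)-1-i) - 1 = -(1/((n:ℝ)-1-i)) := by
      field_simp; ring
    linarith [heq2 ▸ hlog]
  have hy1' : (0:ℝ) < 1 - y := by linarith
  have hS : Filter.Tendsto S atTop (nhds (-Real.log (1-y))) := by
    apply tendsto_of_tendsto_of_tendsto_of_le_of_le'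
      (g := fun n : ℕ => Real.log (n:ℝ) - Real.log ((n:ℝ) - (K n : ℕ)))
      (h := fun n : ℕ => Real.log ((n:ℝ)-1) - Real.log ((n:ℝ)-1-(K n : ℕ)))
      _ _ hSlow hSup
    · apply Filter.Tendsto.congr'
        (f₁ := fun n : ℕ => -Real.log (((n:ℝ) - (K n : ℕ))/n))
      · filter_upwards [hW, Filter.eventually_ge_atTop 1] with n hn hn1
        have hn0 : (0:ℝ) < (n:ℝ) := by exact_mod_cast hn1
        have hnK : (0:ℝ) < (n:ℝ) - (K n : ℕ) := by
          have : (K n : ℝ) = (m n : ℝ) + 1 := by simp [hK]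
          rw [this]; linarith
        rw [Real.log_div (ne_of_gt hnK) (ne_of_gt hn0)]
        ring
      · have := ((Real.continuousAt_log (ne_of_gt hy1')).tendsto.comp hKn).neg
        exact this
    · apply Filter.Tendsto.congr'
        (f₁ := fun n : ℕ => -Real.log (((n:ℝ) - 1 - (K n : ℕ))/((n:ℝ)-1)))
      · filter_upwards [hW, Filter.eventually_ge_atTop 2] with n hn hn2
        have hn0 : (2:ℝ) ≤ (n:ℝ) := by exact_mod_cast hn2
        have hnK : (0:ℝ) < (n:ℝ) - 1 - (K n : ℕ) := by
          have : (K n : ℝ) = (m n : ℝ) + 1 := by simp [hK]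
          rw [this]; linarith
        rw [Real.log_div (ne_of_gt hnK) (by nlinarith)]
        ring
      · exact ((Real.continuousAt_log (ne_of_gt hy1')).tendsto.comp hKn1).neg
  -- error term
  set E : ℕ → ℝ := fun n => ∑ i ∈ Finset.range (K n),
    (Real.log ((n:ℝ)-1-i) - Real.log (((n:ℝ)-1-i) + a n) + a n/((n:ℝ)-1-i)) with hEdef
  have haS : Filter.Tendsto (fun n => a n * S n) atTop
      (nhds ((2*l-1) * (-Real.log (1-y)))) := hA.mul hS
  have hKlim : ∀ n : ℕ, ((m n : ℝ) + 3 ≤ (n:ℝ)) → (0:ℝ) < (n:ℝ) - (K n : ℕ) ∧ (K n : ℝ) ≤ (n:ℝ) := by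
    intro n hn
    have : (K n : ℝ) = (m n : ℝ) + 1 := by simp [hK]
    constructor
    · rw [this]; linarith
    · rw [this]; linarith
  have hEbound : ∀ᶠ n : ℕ in atTop, ‖E n‖ ≤
      (n:ℝ) * ((a n)^2/((((n:ℝ) - (K n : ℕ)))*((((n:ℝ) - (K n : ℕ))) + a n))) := by
    filter_upwards [hW] with n hn
    obtain ⟨hc0, hKle⟩ := hKlim n hn
    have hc2 : (2:ℝ) ≤ (n:ℝ) - (K n : ℕ) := by
      have : (K n : ℝ) = (m n : ℝ) + 1 := by simp [hK]
      rw [this]; linarith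
    have hca : (0:ℝ) < ((n:ℝ) - (K n : ℕ)) + a n := by have := han n; linarith
    calc ‖E n‖ ≤ ∑ i ∈ Finset.range (K n),
          ‖Real.log ((n:ℝ)-1-i) - Real.log (((n:ℝ)-1-i) + a n) + a n/((n:ℝ)-1-i)‖ :=
        norm_sum_le _ _
      _ ≤ ∑ _i ∈ Finset.range (K n),
          (a n)^2/((((n:ℝ) - (K n : ℕ)))*((((n:ℝ) - (K n : ℕ))) + a n)) := by
        apply Finset.sum_le_sum
        intro i hi
        have hx2 := hxlb n hn i hi
        have hx1 : (1:ℝ) ≤ (n:ℝ)-1-i := by linarith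
        have hxlbK : ((n:ℝ) - (K n : ℕ)) ≤ (n:ℝ)-1-i := by
          have : (i:ℝ) ≤ (K n : ℝ) - 1 := by
            have : i+1 ≤ K n := Finset.mem_range.mp hi
            have := (show ((i:ℝ)+1) ≤ (K n : ℝ) by exact_mod_cast this)
            linarith
          linarith
        refine le_trans (log_ineq_aux _ _ hx1 (han n)) ?_
        apply div_le_div_of_nonneg_left (by positivity) (by positivity)
        have h1 : ((n:ℝ) - (K n : ℕ)) + a n ≤ ((n:ℝ)-1-i) + a n := by linarith
        have h2 : (0:ℝ) < ((n:ℝ)-1-i) + a n := by have := han n; linarith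
        nlinarith
      _ = (K n : ℝ) * ((a n)^2/((((n:ℝ) - (K n : ℕ)))*((((n:ℝ) - (K n : ℕ))) + a n))) := by
        rw [Finset.sum_const, Finset.card_range]
        simp [nsmul_eq_mul]
      _ ≤ (n:ℝ) * ((a n)^2/((((n:ℝ) - (K n : ℕ)))*((((n:ℝ) - (K n : ℕ))) + a n))) := by
        apply mul_le_mul_of_nonneg_right hKle
        positivity
  have hKna : Filter.Tendsto (fun n : ℕ => (((n:ℝ) - (K n : ℕ)) + a n)/n) atTop (nhds (1-y)) := by
    have heq : (fun n : ℕ => (((n:ℝ) - (K n : ℕ)) + a n)/n)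
        = fun n : ℕ => ((n:ℝ) - (K n : ℕ))/n + a n * ((n:ℝ))⁻¹ := by
      funext n
      ring
    rw [heq]
    have := hKn.add (hA.mul hinv)
    simpa using this
  have hBzero : Filter.Tendsto (fun n : ℕ =>
      (n:ℝ) * ((a n)^2/((((n:ℝ) - (K n : ℕ)))*((((n:ℝ) - (K n : ℕ))) + a n)))) atTop (nhds 0) := by
    apply Filter.Tendsto.congr'
      (f₁ := fun n : ℕ => (a n)^2 * ((n:ℝ))⁻¹ *
        ((((n:ℝ) - (K n : ℕ))/n)⁻¹ * (((((n:ℝ) - (K n : ℕ)) + a n)/n))⁻¹))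
    · filter_upwards [hW, Filter.eventually_ge_atTop 1] with n hn hn1
      obtain ⟨hc0, _⟩ := hKlim n hn
      have hn0 : (0:ℝ) < (n:ℝ) := by exact_mod_cast hn1
      have hc2 : (2:ℝ) ≤ (n:ℝ) - (K n : ℕ) := by
        have : (K n : ℝ) = (m n : ℝ) + 1 := by simp [hK]
        rw [this]; linarith
      have hca : (0:ℝ) < ((n:ℝ) - (K n : ℕ)) + a n := by have := han n; linarith
      field_simp
    · have hlim := ((hA.pow 2).mul hinv).mul
        ((hKn.inv₀ (ne_of_gt hy1')).mul (hKna.inv₀ (ne_of_gt hy1')))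
      simpa using hlim
  have hEzero : Filter.Tendsto E atTop (nhds 0) := squeeze_zero_norm' hEbound hBzero
  -- the log of the product
  set LQ : ℕ → ℝ := fun n => ∑ i ∈ Finset.range (K n),
    (Real.log ((n:ℝ)-1-i) - Real.log (((n:ℝ)-1-i) + a n)) with hLQdef
  have hLQeq : ∀ n, LQ n = E n - a n * S n := by
    intro n
    simp only [hEdef, hLQdef, hSdef]
    rw [Finset.mul_sum, ← Finset.sum_sub_distrib]
    apply Finset.sum_congr rfl
    intro i _
    rw [mul_one_div]
    ring
  have hLQ : Filter.Tendsto LQ atTop (nhds ((2*l-1) * Real.log (1-y))) := by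
    have := hEzero.sub haS
    rw [show (0 - (2*l-1) * (-Real.log (1-y))) = (2*l-1) * Real.log (1-y) by ring] at this
    exact this.congr fun n => (hLQeq n).symm
  -- identify the product with exp (LQ n)
  have hprod : ∀ᶠ n : ℕ in atTop,
      (∏ i ∈ Finset.Icc 1 (⌊(n:ℝ)*y⌋₊ + 1), (((n:ℝ) - i) / ((n:ℝ) - i + 2*(r n) - 1)))
        = Real.exp (LQ n) := by
    filter_upwards [hW] with n hn
    have hIcc : (∏ i ∈ Finset.Icc 1 (⌊(n:ℝ)*y⌋₊ + 1), (((n:ℝ) - i) / ((n:ℝ) - i + 2*(r n) - 1)))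
        = ∏ i ∈ Finset.range (K n), (((n:ℝ)-1-i) / (((n:ℝ)-1-i) + a n)) := by
      rw [← Finset.Ico_add_one_right_eq_Icc, Finset.prod_Ico_eq_prod_range]
      apply Finset.prod_congr (by simp [hK, hm])
      intro i _
      have h1 : ((n:ℝ) - ((1+i : ℕ):ℝ)) = (n:ℝ)-1-i := by push_cast; ring
      have h2 : ((n:ℝ) - ((1+i : ℕ):ℝ) + 2*(r n) - 1) = ((n:ℝ)-1-i) + a n := by
        simp only [ha]; push_cast; ring
      rw [h2, h1]
    rw [hIcc, hLQdef, Real.exp_sum]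
    apply Finset.prod_congr rfl
    intro i hi
    have hx2 := hxlb n hn i hi
    have hx0 : (0:ℝ) < (n:ℝ)-1-i := by linarith
    have hxa : (0:ℝ) < ((n:ℝ)-1-i) + a n := by have := han n; linarith
    rw [Real.exp_sub, Real.exp_log hx0, Real.exp_log hxa]
  have hfinal := (Real.continuous_exp.continuousAt.tendsto.comp hLQ)
  rw [show Real.exp ((2*l-1) * Real.log (1-y)) = (1-y) ^ (2*l-1) from by
    rw [Real.rpow_def_of_pos hy1', mul_comm]] at hfinal
  exact Filter.Tendsto.congr' (Filter.EventuallyEq.symm hprod) hfinal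

/-- If `r_n → r > 0`, then for every `y ∈ [0,1]`,
`∑_{k=0}^{⌊ny⌋} p_{n,r_n}(k) → ∫_0^y 2r(2r+1) x (1-x)^{2r-1} dx`; that is, the
rescaled degree `D_n/n` converges in distribution to a Beta(2, 2r) random variable. -/
theorem rescaled_degree_cdf_tendsto_beta (r : ℕ → ℝ) (hr : ∀ n, 0 < r n)
    (l : ℝ) (hl : 0 < l) (h : Tendsto r atTop (nhds l))
    (y : ℝ) (hy : y ∈ Set.Icc (0 : ℝ) 1) :
    Tendsto (fun n : ℕ => ∑ k ∈ Finset.range (⌊(n : ℝ) * y⌋₊ + 1), splitDriftPMF n (r n) k)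
      atTop
      (nhds (∫ t in (0 : ℝ)..y, 2 * l * (2 * l + 1) * t * (1 - t) ^ (2 * l - 1))) := by
  obtain ⟨hy0, hy1⟩ := hy
  rw [beta_integral_eval l hl y hy0 hy1]
  rcases eq_or_lt_of_le hy1 with h1 | h1
  · -- y = 1
    subst h1
    have hz : ((1:ℝ) - 1) ^ (2*l : ℝ) = 0 := by
      rw [show (1:ℝ) - 1 = 0 by norm_num, Real.zero_rpow (by positivity)]
    rw [hz, mul_zero, sub_zero]
    apply Filter.Tendsto.congr' _ (tendsto_const_nhds (x := (1:ℝ)))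
    filter_upwards [Filter.eventually_ge_atTop 1] with n hn
    have hfl : ⌊(n:ℝ)*1⌋₊ = n := by rw [mul_one, Nat.floor_natCast]
    rw [hfl, sdp_sum_all n hn (r n) (hr n) n (by omega)]
  · -- y < 1
    have hy1' : (0:ℝ) < 1 - y := by linarith
    have hinv : Filter.Tendsto (fun n : ℕ => ((n:ℝ))⁻¹) atTop (nhds 0) :=
      tendsto_inv_atTop_zero.comp tendsto_natCast_atTop_atTop
    have hφ : Filter.Tendsto (fun n : ℕ => ((⌊(n:ℝ)*y⌋₊ : ℕ) : ℝ)/n) atTop (nhds y) :=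
      tendsto_floor_mul_div y hy0
    have hW : ∀ᶠ n : ℕ in atTop, ((⌊(n:ℝ)*y⌋₊ : ℝ) + 3 ≤ (n:ℝ)) := by
      have h3 : Filter.Tendsto (fun n : ℕ => (n:ℝ)*(1-y)) atTop atTop :=
        Filter.Tendsto.atTop_mul_const (by linarith) tendsto_natCast_atTop_atTop
      filter_upwards [h3.eventually_ge_atTop 3] with n hn
      have hfl : ((⌊(n:ℝ)*y⌋₊ : ℕ) : ℝ) ≤ (n:ℝ)*y := Nat.floor_le (by positivity)
      nlinarith
    have hrl : Filter.Tendsto (fun n : ℕ => 2 * r n * ((n:ℝ))⁻¹) atTop (nhds 0) := by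
      have := (tendsto_const_nhds (x := (2:ℝ)).mul h).mul hinv
      simpa using this
    have hrl4 : Filter.Tendsto (fun n : ℕ => 4 * r n * ((n:ℝ))⁻¹) atTop (nhds 0) := by
      have := (tendsto_const_nhds (x := (4:ℝ)).mul h).mul hinv
      simpa using this
    -- prefactor limit
    have hpre : Filter.Tendsto (fun n : ℕ =>
        ((n:ℝ) + 2*(r n) - 2 - (⌊(n:ℝ)*y⌋₊ : ℕ)) * (2*(r n)*(⌊(n:ℝ)*y⌋₊ : ℕ) + (n:ℝ) + 4*(r n))
          / (((n:ℝ) + 2*(r n)) * ((n:ℝ) + 2*(r n) - 1)))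
        atTop (nhds ((1-y) * (2*l*y + 1))) := by
      have hnum : Filter.Tendsto (fun n : ℕ =>
          (1 + 2*(r n)*((n:ℝ))⁻¹ - 2*((n:ℝ))⁻¹ - ((⌊(n:ℝ)*y⌋₊ : ℕ) : ℝ)/n) *
          (2*(r n)*(((⌊(n:ℝ)*y⌋₊ : ℕ) : ℝ)/n) + 1 + 4*(r n)*((n:ℝ))⁻¹))
          atTop (nhds ((1 + 0 - 2*0 - y) * (2*l*y + 1 + 0))) := by
        apply Filter.Tendsto.mul
        · exact ((tendsto_const_nhds.add hrl).sub (tendsto_const_nhds.mul hinv)).sub hφ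
        · exact (((tendsto_const_nhds.mul h).mul hφ).add tendsto_const_nhds).add hrl4
      have hden : Filter.Tendsto (fun n : ℕ =>
          (1 + 2*(r n)*((n:ℝ))⁻¹) * (1 + 2*(r n)*((n:ℝ))⁻¹ - ((n:ℝ))⁻¹))
          atTop (nhds ((1 + 0) * (1 + 0 - 0))) := by
        apply Filter.Tendsto.mul
        · exact tendsto_const_nhds.add hrl
        · exact (tendsto_const_nhds.add hrl).sub hinv
      have hq := hnum.div hden (by norm_num)
      apply Filter.Tendsto.congr' _ (by norm_num at hq ⊢; convert hq using 2 <;> ring)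
      filter_upwards [Filter.eventually_ge_atTop 1] with n hn
      have hn0 : ((n:ℝ)) ≠ 0 := by positivity
      have hrn := hr n
      have hd1 : ((n:ℝ) + 2*(r n)) ≠ 0 := by positivity
      have hn1 : (1:ℝ) ≤ (n:ℝ) := by exact_mod_cast hn
      have hd2 : ((n:ℝ) + 2*(r n) - 1) ≠ 0 := by nlinarith
      simp only [Pi.div_apply, mul_comm y (n:ℝ)]
      field_simp
    have hprod := sdp_prod_tendsto r hr l hl h y hy0 h1
    have hcomb := hpre.mul hprod
    have hlimit : (1-y) * (2*l*y + 1) * ((1-y) ^ (2*l-1 : ℝ)) = (1 + 2*l*y) * (1-y) ^ (2*l : ℝ) := by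
      rw [show (2*l : ℝ) = (2*l-1) + 1 by ring, Real.rpow_add_one (ne_of_gt hy1')]
      ring
    have hfinal := tendsto_const_nhds (x := (1:ℝ)).sub hcomb
    rw [hlimit] at hfinal
    apply Filter.Tendsto.congr' _ hfinal
    filter_upwards [hW] with n hn
    have hmn : ⌊(n:ℝ)*y⌋₊ + 2 ≤ n := by
      have : ((⌊(n:ℝ)*y⌋₊ : ℕ) : ℝ) + 2 ≤ (n:ℝ) := by linarith
      exact_mod_cast this
    rw [sdp_closed_form n (r n) (hr n) (⌊(n:ℝ)*y⌋₊) hmn]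
    ring
end

section
/- Let (r_n) be a sequence of positive real numbers with r_n → ∞ and r_n/n → 0 as n → ∞. Then for every x ≥ 0, the rescaled degree density f_n(x) := (n/r_n) · p_{n,r_n}(⌊(n/r_n)·x⌋) converges, as n → ∞, to 4x e^{−2x}, which is the probability density function of a size-biased exponential distribution with parameter 2. -/
open Filter Finset

set_option maxHeartbeats 1000000 in
/-- Intermediate regime: if `r_n → ∞` and `r_n/n → 0`, then for every `x ≥ 0`
the rescaled degree density `f_n(x) = (n/r_n) · p_{n,r_n}(⌊(n/r_n)x⌋)` converges to
`4x e^{-2x}`, the density of a size-biased exponential distribution with parameter 2. -/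
theorem rescaled_degree_density_tendsto_sizeBiased_exponential
    (r : ℕ → ℝ) (hr : ∀ n, 0 < r n)
    (h1 : Tendsto r atTop atTop) (h2 : Tendsto (fun n => r n / (n : ℝ)) atTop (nhds 0))
    (x : ℝ) (hx : 0 ≤ x) :
    Tendsto (fun n : ℕ => ((n : ℝ) / r n) * splitDriftPMF n (r n) ⌊((n : ℝ) / r n) * x⌋₊)
      atTop (nhds (4 * x * Real.exp (-2 * x))) := by
  -- abbreviation for the floor index
  set K : ℕ → ℕ := fun n => ⌊((n : ℝ) / r n) * x⌋₊ with hK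
  have hKn : ∀ n : ℕ, ⌊((n : ℝ) / r n) * x⌋₊ = K n := fun n => by rw [hK]
  simp only [hKn]
  have hsx : ∀ n : ℕ, 0 ≤ ((n:ℝ)/r n) * x :=
    fun n => mul_nonneg (div_nonneg (Nat.cast_nonneg n) (hr n).le) hx
  -- n / r n → ∞
  have hs : Tendsto (fun n : ℕ => (n:ℝ) / r n) atTop atTop := by
    have h3 : Tendsto (fun n : ℕ => r n / (n:ℝ)) atTop (nhdsWithin 0 (Set.Ioi 0)) := by
      refine tendsto_nhdsWithin_of_tendsto_nhds_of_eventually_within _ h2 ?_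
      filter_upwards [eventually_gt_atTop 0] with n hn
      exact div_pos (hr n) (by exact_mod_cast hn)
    exact h3.inv_tendsto_nhdsGT_zero.congr fun n => by simp [inv_div]
  have hspos : ∀ᶠ n : ℕ in atTop, 0 < (n:ℝ) / r n := hs.eventually_gt_atTop 0
  have hrinv : Tendsto (fun n => (r n)⁻¹) atTop (nhds 0) := h1.inv_tendsto_atTop
  have hsinv : Tendsto (fun n : ℕ => ((n:ℝ) / r n)⁻¹) atTop (nhds 0) := hs.inv_tendsto_atTop
  have hninv : Tendsto (fun n : ℕ => ((n:ℝ))⁻¹) atTop (nhds 0) :=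
    tendsto_natCast_atTop_atTop.inv_tendsto_atTop
  -- K n / (n / r n) → x
  have hks : Tendsto (fun n => (K n : ℝ) / ((n:ℝ)/r n)) atTop (nhds x) := by
    refine tendsto_of_tendsto_of_tendsto_of_le_of_le'
      (g := fun n : ℕ => x - ((n:ℝ)/r n)⁻¹) (h := fun _ : ℕ => x) ?_ tendsto_const_nhds ?_ ?_
    · simpa using tendsto_const_nhds.sub hsinv
    · filter_upwards [hspos] with n hn
      rw [sub_le_iff_le_add, div_add' _ _ _ hn.ne', le_div_iff₀ hn]
      have h5 : ((n:ℝ)/r n) * x < (K n : ℝ) + 1 := Nat.lt_floor_add_one _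
      have h6 : ((n:ℝ)/r n)⁻¹ * ((n:ℝ)/r n) = 1 := inv_mul_cancel₀ hn.ne'
      nlinarith
    · filter_upwards [hspos] with n hn
      rw [div_le_iff₀ hn]
      have h5 : (K n : ℝ) ≤ ((n:ℝ)/r n) * x := Nat.floor_le (hsx n)
      linarith
  -- (K n + 1)/(n/r n) → x
  have hk1s : Tendsto (fun n => ((K n : ℝ) + 1) / ((n:ℝ)/r n)) atTop (nhds x) := by
    have h7 := hks.add hsinv
    rw [add_zero] at h7
    refine h7.congr' ?_
    filter_upwards [hspos] with n hn
    rw [add_div]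
    simp [div_eq_mul_inv]
  -- K n / n → 0
  have hkn : Tendsto (fun n => (K n : ℝ) / (n:ℝ)) atTop (nhds 0) := by
    refine tendsto_of_tendsto_of_tendsto_of_le_of_le'
      (g := fun _ : ℕ => (0:ℝ)) (h := fun n : ℕ => x * (r n)⁻¹) tendsto_const_nhds ?_ ?_ ?_
    · simpa using hrinv.const_mul x
    · filter_upwards with n
      positivity
    · filter_upwards [eventually_gt_atTop 0] with n hn
      have hn' : (0:ℝ) < n := by exact_mod_cast hn
      rw [div_le_iff₀ hn']
      have h5 : (K n : ℝ) ≤ ((n:ℝ)/r n) * x := Nat.floor_le (hsx n)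
      have h6 : ((n:ℝ)/r n) * x = x * (r n)⁻¹ * n := by
        rw [div_eq_mul_inv]; ring
      linarith [h6 ▸ h5]
  -- master eventually
  have hE : ∀ᶠ n : ℕ in atTop, 1 < r n ∧ 2 ≤ (n:ℝ) ∧ (K n : ℝ) < (n:ℝ)/2 := by
    filter_upwards [h1.eventually_gt_atTop 1, eventually_ge_atTop 2,
      hkn.eventually_lt_const (by norm_num : (0:ℝ) < 1/2)] with n ha hb hc
    have hn2 : (2:ℝ) ≤ (n:ℝ) := by exact_mod_cast hb
    refine ⟨ha, hn2, ?_⟩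
    have hn' : (0:ℝ) < n := by linarith
    have := (div_lt_iff₀ hn').mp hc
    linarith
  -- the prefactor A and the product P
  set A : ℕ → ℝ := fun n => ((n:ℝ)/r n) *
    (2 * r n * (2 * r n + 1) / (((n : ℝ) + 2 * r n) * ((n : ℝ) - 1 + 2 * r n))) *
    ((K n : ℝ) + 1) with hA_def
  set P : ℕ → ℝ := fun n =>
    ∏ i ∈ Finset.Icc 1 (K n), (((n : ℝ) - (i : ℝ)) / ((n : ℝ) - (i : ℝ) + 2 * r n - 1))
    with hP_def
  have hfP : ∀ᶠ n : ℕ in atTop,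
      ((n:ℝ)/r n) * splitDriftPMF n (r n) (K n) = A n * P n := by
    filter_upwards [hE] with n ⟨h1n, h2n, h3n⟩
    have hklt : K n < n := by
      have : (K n : ℝ) < (n:ℝ) := by linarith
      exact_mod_cast this
    rw [splitDriftPMF, if_pos hklt, hA_def, hP_def]
    ring
  -- A → 4x
  have hA : Tendsto A atTop (nhds (4 * x)) := by
    have hAeq : ∀ᶠ n : ℕ in atTop, A n =
        ((K n : ℝ) + 1) / ((n:ℝ)/r n) * (2 * (2 + (r n)⁻¹)) *
        ((1 + 2 * (r n / (n:ℝ)))⁻¹ * (1 - ((n:ℝ))⁻¹ + 2 * (r n / (n:ℝ)))⁻¹) := by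
      filter_upwards [hE] with n ⟨h1n, h2n, h3n⟩
      have hn0 : (n:ℝ) ≠ 0 := by linarith
      have hr0 : r n ≠ 0 := (hr n).ne'
      have hd1 : (n:ℝ) + 2 * r n ≠ 0 := by nlinarith
      have hd2 : (n:ℝ) - 1 + 2 * r n ≠ 0 := by nlinarith
      rw [hA_def]
      field_simp
    have l1 : Tendsto (fun n => 2 * (2 + (r n)⁻¹)) atTop (nhds (2 * (2 + 0))) :=
      (tendsto_const_nhds.add hrinv).const_mul 2
    have l2 : Tendsto (fun n : ℕ => (1 + 2 * (r n / (n:ℝ)))⁻¹) atTop (nhds ((1 + 2*0:ℝ)⁻¹)) :=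
      (tendsto_const_nhds.add (h2.const_mul 2)).inv₀ (by norm_num)
    have l3 : Tendsto (fun n : ℕ => (1 - ((n:ℝ))⁻¹ + 2 * (r n / (n:ℝ)))⁻¹) atTop
        (nhds ((1 - 0 + 2*0:ℝ)⁻¹)) :=
      ((tendsto_const_nhds.sub hninv).add (h2.const_mul 2)).inv₀ (by norm_num)
    have hlim := (hk1s.mul l1).mul (l2.mul l3)
    have : x * (2 * (2 + 0)) * ((1 + 2*0:ℝ)⁻¹ * (1 - 0 + 2*0:ℝ)⁻¹) = 4 * x := by
      norm_num [mul_comm]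
    rw [this] at hlim
    exact hlim.congr' (EventuallyEq.symm hAeq)
  -- a and b
  set a : ℕ → ℝ := fun n => (2 * r n - 1) / ((n:ℝ) - (K n : ℝ)) with ha_def
  set b : ℕ → ℝ := fun n => (2 * r n - 1) / ((n:ℝ) - 1) with hb_def
  have hEa : ∀ᶠ n : ℕ in atTop, 0 < a n ∧ 0 < b n ∧ a n ≤ 4 * (r n / (n:ℝ))
      ∧ b n ≤ 4 * (r n / (n:ℝ)) := by
    filter_upwards [hE] with n ⟨h1n, h2n, h3n⟩
    have hnk : (0:ℝ) < (n:ℝ) - (K n : ℝ) := by linarith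
    have hn1 : (0:ℝ) < (n:ℝ) - 1 := by linarith
    have hn' : (0:ℝ) < n := by linarith
    have hnum : (0:ℝ) < 2 * r n - 1 := by linarith
    refine ⟨div_pos hnum hnk, div_pos hnum hn1, ?_, ?_⟩
    · rw [ha_def, show 4 * (r n / (n:ℝ)) = (4 * r n) / (n:ℝ) by ring,
        div_le_div_iff₀ hnk hn']
      nlinarith
    · rw [hb_def, show 4 * (r n / (n:ℝ)) = (4 * r n) / (n:ℝ) by ring,
        div_le_div_iff₀ hn1 hn']
      nlinarith
  have hub : Tendsto (fun n : ℕ => 4 * (r n / (n:ℝ))) atTop (nhds 0) := by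
    simpa using h2.const_mul 4
  have ha0 : Tendsto a atTop (nhds 0) := by
    refine tendsto_of_tendsto_of_tendsto_of_le_of_le'
      (g := fun _ : ℕ => (0:ℝ)) (h := fun n : ℕ => 4 * (r n / (n:ℝ))) tendsto_const_nhds hub ?_ ?_
    · filter_upwards [hEa] with n hn; exact hn.1.le
    · filter_upwards [hEa] with n hn; exact hn.2.2.1
  have hb0 : Tendsto b atTop (nhds 0) := by
    refine tendsto_of_tendsto_of_tendsto_of_le_of_le'
      (g := fun _ : ℕ => (0:ℝ)) (h := fun n : ℕ => 4 * (r n / (n:ℝ))) tendsto_const_nhds hub ?_ ?_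
    · filter_upwards [hEa] with n hn; exact hn.2.1.le
    · filter_upwards [hEa] with n hn; exact hn.2.2.2
  -- K·a → 2x and K·b → 2x
  have hka : Tendsto (fun n => (K n : ℝ) * a n) atTop (nhds (2 * x)) := by
    have heq : ∀ᶠ n : ℕ in atTop, (K n : ℝ) * a n =
        (K n : ℝ) / ((n:ℝ)/r n) * (2 - (r n)⁻¹) * (1 - (K n : ℝ)/(n:ℝ))⁻¹ := by
      filter_upwards [hE] with n ⟨h1n, h2n, h3n⟩
      have hn0 : (n:ℝ) ≠ 0 := by linarith
      have hr0 : r n ≠ 0 := (hr n).ne'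
      have hnk : (n:ℝ) - (K n : ℝ) ≠ 0 := by intro h; nlinarith [h]
      rw [ha_def]
      field_simp
    have hlim : Tendsto (fun n => (K n : ℝ) / ((n:ℝ)/r n) * (2 - (r n)⁻¹) *
        (1 - (K n : ℝ)/(n:ℝ))⁻¹) atTop (nhds (x * (2 - 0) * ((1:ℝ) - 0)⁻¹)) :=
      (hks.mul (tendsto_const_nhds.sub hrinv)).mul
        ((tendsto_const_nhds.sub hkn).inv₀ (by norm_num : (1:ℝ) - 0 ≠ 0))
    have : x * (2 - 0) * ((1:ℝ) - 0)⁻¹ = 2 * x := by norm_num [mul_comm]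
    rw [this] at hlim
    exact hlim.congr' (EventuallyEq.symm heq)
  have hkb : Tendsto (fun n => (K n : ℝ) * b n) atTop (nhds (2 * x)) := by
    have heq : ∀ᶠ n : ℕ in atTop, (K n : ℝ) * b n =
        (K n : ℝ) / ((n:ℝ)/r n) * (2 - (r n)⁻¹) * (1 - ((n:ℝ))⁻¹)⁻¹ := by
      filter_upwards [hE] with n ⟨h1n, h2n, h3n⟩
      have hn0 : (n:ℝ) ≠ 0 := by linarith
      have hr0 : r n ≠ 0 := (hr n).ne'
      have hn1 : (n:ℝ) - 1 ≠ 0 := by intro h; nlinarith [h]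
      rw [hb_def]
      field_simp
    have hlim : Tendsto (fun n => (K n : ℝ) / ((n:ℝ)/r n) * (2 - (r n)⁻¹) *
        (1 - ((n:ℝ))⁻¹)⁻¹) atTop (nhds (x * (2 - 0) * ((1:ℝ) - 0)⁻¹)) :=
      (hks.mul (tendsto_const_nhds.sub hrinv)).mul
        ((tendsto_const_nhds.sub hninv).inv₀ (by norm_num : (1:ℝ) - 0 ≠ 0))
    have : x * (2 - 0) * ((1:ℝ) - 0)⁻¹ = 2 * x := by norm_num [mul_comm]
    rw [this] at hlim
    exact hlim.congr' (EventuallyEq.symm heq)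
  -- K log(1+a) → 2x, K log(1+b) → 2x
  have logsq : ∀ (c : ℕ → ℝ), Tendsto c atTop (nhds 0) →
      Tendsto (fun n => (K n : ℝ) * c n) atTop (nhds (2 * x)) →
      (∀ᶠ n : ℕ in atTop, 0 < c n) →
      Tendsto (fun n => (K n : ℝ) * Real.log (1 + c n)) atTop (nhds (2 * x)) := by
    intro c hc0 hkc hcpos
    have hlow : Tendsto (fun n => ((K n : ℝ) * c n) * (1 + c n)⁻¹) atTop (nhds (2 * x)) := by
      have := hkc.mul ((tendsto_const_nhds.add hc0).inv₀ (by norm_num : (1:ℝ) + 0 ≠ 0))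
      simpa using this
    refine tendsto_of_tendsto_of_tendsto_of_le_of_le'
      (g := fun n => ((K n : ℝ) * c n) * (1 + c n)⁻¹) (h := fun n => (K n : ℝ) * c n)
      hlow hkc ?_ ?_
    · filter_upwards [hcpos] with n hn
      have h1c : (0:ℝ) < 1 + c n := by linarith
      have h7 := Real.log_le_sub_one_of_pos (inv_pos.mpr h1c)
      rw [Real.log_inv] at h7
      have h8 : c n * (1 + c n)⁻¹ ≤ Real.log (1 + c n) := by
        have h9 : (1:ℝ) - (1 + c n)⁻¹ = c n * (1 + c n)⁻¹ := by field_simp; ring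
        linarith
      rw [mul_assoc]
      exact mul_le_mul_of_nonneg_left h8 (Nat.cast_nonneg _)
    · filter_upwards [hcpos] with n hn
      have h1c : (0:ℝ) < 1 + c n := by linarith
      have h7 := Real.log_le_sub_one_of_pos h1c
      have h8 : Real.log (1 + c n) ≤ c n := by linarith
      exact mul_le_mul_of_nonneg_left h8 (Nat.cast_nonneg _)
    
  have hla := logsq a ha0 hka (by filter_upwards [hEa] with n hn; exact hn.1)
  have hlb := logsq b hb0 hkb (by filter_upwards [hEa] with n hn; exact hn.2.1)
  -- the power bounds, expressed via exp
  set C : ℕ → ℝ := fun n => (((n:ℝ) - (K n : ℝ)) / ((n:ℝ) - (K n : ℝ) + 2 * r n - 1)) ^ (K n)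
    with hC_def
  set D : ℕ → ℝ := fun n => (((n:ℝ) - 1) / ((n:ℝ) - 1 + 2 * r n - 1)) ^ (K n) with hD_def
  have hCexp : ∀ᶠ n : ℕ in atTop, C n = Real.exp (-((K n : ℝ) * Real.log (1 + a n))) := by
    filter_upwards [hE, hEa] with n ⟨h1n, h2n, h3n⟩ hea
    have hnk : (0:ℝ) < (n:ℝ) - (K n : ℝ) := by linarith
    have h1a : (0:ℝ) < 1 + a n := by linarith [hea.1]
    have hceq : ((n:ℝ) - (K n : ℝ)) / ((n:ℝ) - (K n : ℝ) + 2 * r n - 1) = (1 + a n)⁻¹ := by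
      rw [ha_def]
      field_simp
      ring
    simp only [hC_def]
    rw [hceq, show -((K n : ℝ) * Real.log (1 + a n)) = (K n : ℝ) * (-Real.log (1 + a n)) by
      ring, Real.exp_nat_mul, Real.exp_neg, Real.exp_log h1a]
  have hDexp : ∀ᶠ n : ℕ in atTop, D n = Real.exp (-((K n : ℝ) * Real.log (1 + b n))) := by
    filter_upwards [hE, hEa] with n ⟨h1n, h2n, h3n⟩ hea
    have hn1 : (0:ℝ) < (n:ℝ) - 1 := by linarith
    have h1b : (0:ℝ) < 1 + b n := by linarith [hea.2.1]
    have hdeq : ((n:ℝ) - 1) / ((n:ℝ) - 1 + 2 * r n - 1) = (1 + b n)⁻¹ := by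
      rw [hb_def]
      field_simp
      ring
    simp only [hD_def]
    rw [hdeq, show -((K n : ℝ) * Real.log (1 + b n)) = (K n : ℝ) * (-Real.log (1 + b n)) by
      ring, Real.exp_nat_mul, Real.exp_neg, Real.exp_log h1b]
  have hC : Tendsto C atTop (nhds (Real.exp (-(2 * x)))) := by
    have := (Real.continuous_exp.tendsto _).comp hla.neg
    exact (this.congr' (EventuallyEq.symm hCexp))
  have hD : Tendsto D atTop (nhds (Real.exp (-(2 * x)))) := by
    have := (Real.continuous_exp.tendsto _).comp hlb.neg
    exact (this.congr' (EventuallyEq.symm hDexp))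
  -- sandwich for P
  have hsand : ∀ᶠ n : ℕ in atTop, C n ≤ P n ∧ P n ≤ D n := by
    filter_upwards [hE] with n ⟨h1n, h2n, h3n⟩
    have hnk : (0:ℝ) < (n:ℝ) - (K n : ℝ) := by linarith
    have hnum : (0:ℝ) < 2 * r n - 1 := by linarith
    constructor
    · rw [hC_def, hP_def]
      calc (((n:ℝ) - (K n : ℝ)) / ((n:ℝ) - (K n : ℝ) + 2 * r n - 1)) ^ (K n)
          = ∏ _i ∈ Finset.Icc 1 (K n),
            (((n:ℝ) - (K n : ℝ)) / ((n:ℝ) - (K n : ℝ) + 2 * r n - 1)) := by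
            rw [Finset.prod_const, Nat.card_Icc]; simp
        _ ≤ _ := by
            refine Finset.prod_le_prod
              (fun i _ => div_nonneg hnk.le (by linarith)) (fun i hi => ?_)
            rw [Finset.mem_Icc] at hi
            have hik : (i:ℝ) ≤ (K n : ℝ) := by exact_mod_cast hi.2
            have hi1 : (1:ℝ) ≤ (i:ℝ) := by exact_mod_cast hi.1
            have hni : (0:ℝ) < (n:ℝ) - (i:ℝ) := by linarith
            rw [div_le_div_iff₀ (by linarith) (by linarith)]
            nlinarith [mul_nonneg (by linarith : (0:ℝ) ≤ (K n:ℝ) - (i:ℝ)) hnum.le]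
    · rw [hD_def, hP_def]
      calc (∏ i ∈ Finset.Icc 1 (K n),
            (((n:ℝ) - (i:ℝ)) / ((n:ℝ) - (i:ℝ) + 2 * r n - 1)))
          ≤ ∏ _i ∈ Finset.Icc 1 (K n), (((n:ℝ) - 1) / ((n:ℝ) - 1 + 2 * r n - 1)) := by
            refine Finset.prod_le_prod (fun i hi => ?_) (fun i hi => ?_)
            · rw [Finset.mem_Icc] at hi
              have hik : (i:ℝ) ≤ (K n : ℝ) := by exact_mod_cast hi.2
              have hni : (0:ℝ) < (n:ℝ) - (i:ℝ) := by linarith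
              exact div_nonneg hni.le (by linarith)
            · rw [Finset.mem_Icc] at hi
              have hik : (i:ℝ) ≤ (K n : ℝ) := by exact_mod_cast hi.2
              have hi1 : (1:ℝ) ≤ (i:ℝ) := by exact_mod_cast hi.1
              have hni : (0:ℝ) < (n:ℝ) - (i:ℝ) := by linarith
              rw [div_le_div_iff₀ (by linarith) (by linarith)]
              nlinarith [mul_nonneg (by linarith : (0:ℝ) ≤ (i:ℝ) - 1) hnum.le]
        _ = (((n:ℝ) - 1) / ((n:ℝ) - 1 + 2 * r n - 1)) ^ (K n) := by
            rw [Finset.prod_const, Nat.card_Icc]; simp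
  -- A nonneg eventually
  have hA0 : ∀ᶠ n : ℕ in atTop, 0 ≤ A n := by
    filter_upwards [hE] with n ⟨h1n, h2n, h3n⟩
    rw [hA_def]
    have : (0:ℝ) ≤ (n:ℝ) - 1 + 2 * r n := by linarith
    apply mul_nonneg (mul_nonneg _ _) _
    · exact div_nonneg (Nat.cast_nonneg n) (hr n).le
    · apply div_nonneg (by nlinarith) (by nlinarith)
    · positivity
  -- conclude
  have htarget : (4:ℝ) * x * Real.exp (-2 * x) = 4 * x * Real.exp (-(2 * x)) := by
    norm_num
  rw [htarget]
  refine tendsto_of_tendsto_of_tendsto_of_le_of_le'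
    (g := fun n => A n * C n) (h := fun n => A n * D n) (hA.mul hC) (hA.mul hD) ?_ ?_
  · filter_upwards [hfP, hsand, hA0] with n h5 h6 h7
    rw [h5]
    exact mul_le_mul_of_nonneg_left h6.1 h7
  · filter_upwards [hfP, hsand, hA0] with n h5 h6 h7
    rw [h5]
    exact mul_le_mul_of_nonneg_left h6.2 h7
end

section
/- Let (r_n) be a sequence of positive real numbers with r_n → ∞ and r_n/n → 0 as n → ∞, let x ≥ 0, and set k_n = ⌊n x / r_n⌋. Then Γ(n) · Γ(n − k_n + 2r_n − 1) / (Γ(n − k_n) · Γ(n + 2r_n − 1)) → e^{−2x} as n → ∞, where Γ denotes the gamma function. -/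
open Filter

open Finset

lemma myGamma_add_nat (a : ℝ) (ha : 0 < a) (k : ℕ) :
    Real.Gamma (a + k) = (∏ j ∈ range k, (a + j)) * Real.Gamma a := by
  induction k with
  | zero => simp
  | succ k ih =>
    have h1 : a + ((k : ℕ) + 1 : ℕ) = (a + k) + 1 := by push_cast; ring
    rw [h1, Real.Gamma_add_one (by positivity), ih, prod_range_succ]
    ring

lemma pow_ratio_tendsto (k : ℕ → ℕ) (t : ℕ → ℝ) (L : ℝ)
    (ht0 : ∀ᶠ n in atTop, 0 < t n) (ht1 : ∀ᶠ n in atTop, t n < 1)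
    (ht : Tendsto t atTop (nhds 0))
    (hkt : Tendsto (fun n => (k n : ℝ) * t n) atTop (nhds L)) :
    Tendsto (fun n => (1 - t n) ^ k n) atTop (nhds (Real.exp (-L))) := by
  have hslope : Tendsto (slope Real.log 1) (nhdsWithin 1 {(1:ℝ)}ᶜ) (nhds 1) := by
    have := hasDerivAt_iff_tendsto_slope.mp (Real.hasDerivAt_log one_ne_zero)
    simpa using this
  -- composed: y n = 1 - t n
  have hy : Tendsto (fun n => 1 - t n) atTop (nhdsWithin 1 {(1:ℝ)}ᶜ) := by
    rw [tendsto_nhdsWithin_iff]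
    constructor
    · simpa using (tendsto_const_nhds.sub ht)
    · filter_upwards [ht0] with n hn
      simp only [Set.mem_compl_iff, Set.mem_singleton_iff]
      intro h
      nlinarith
  have hg : Tendsto (fun n => Real.log (1 - t n) / (-(t n))) atTop (nhds 1) := by
    have h := hslope.comp hy
    have he : (slope Real.log 1 ∘ fun n => 1 - t n) = fun n => Real.log (1 - t n) / (-(t n)) := by
      funext n
      simp [Function.comp, slope_def_field, Real.log_one]
    rwa [he] at h
  have hlog : Tendsto (fun n => (k n : ℝ) * Real.log (1 - t n)) atTop (nhds (-L)) := by
    have h := (hkt.mul hg).neg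
    have : (fun n => -((k n : ℝ) * t n * (Real.log (1 - t n) / (-(t n))))) =ᶠ[atTop]
        (fun n => (k n : ℝ) * Real.log (1 - t n)) := by
      filter_upwards [ht0] with n hn
      have hne : t n ≠ 0 := ne_of_gt hn
      field_simp
    simpa [neg_mul, mul_one] using h.congr' this
  have hexp := (Real.continuous_exp.tendsto (-L)).comp hlog
  refine Tendsto.congr' ?_ hexp
  filter_upwards [ht0, ht1] with n hn0 hn1
  have hpos : 0 < 1 - t n := by linarith
  simp only [Function.comp_apply]
  rw [Real.exp_nat_mul, Real.exp_log hpos]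

lemma ratio_pow_tendsto (k : ℕ → ℕ) (m c : ℕ → ℝ) (L : ℝ)
    (hm : Tendsto (fun n => m n / (n : ℝ)) atTop (nhds 1))
    (hc : Tendsto (fun n => c n / (n : ℝ)) atTop (nhds 0))
    (hcpos : ∀ᶠ n in atTop, 0 < c n) (hmpos : ∀ᶠ n in atTop, 0 < m n)
    (hkc : Tendsto (fun n => (k n : ℝ) * c n / (n : ℝ)) atTop (nhds L)) :
    Tendsto (fun n => (m n / (m n + c n)) ^ k n) atTop (nhds (Real.exp (-L))) := by
  set t : ℕ → ℝ := fun n => c n / (m n + c n) with ht_def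
  have hmc : Tendsto (fun n => (m n + c n) / (n : ℝ)) atTop (nhds 1) := by
    have := hm.add hc
    simpa [add_div] using this
  have hinv : Tendsto (fun n : ℕ => (n : ℝ) / (m n + c n)) atTop (nhds 1) := by
    have := hmc.inv₀ one_ne_zero
    simpa [inv_div] using this
  have hmcpos : ∀ᶠ n in atTop, 0 < m n + c n := by
    filter_upwards [hcpos, hmpos] with n h1 h2; linarith
  have hnpos : ∀ᶠ n : ℕ in atTop, 0 < (n : ℝ) := by
    filter_upwards [eventually_ge_atTop 1] with n hn
    have : (0:ℕ) < n := hn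
    exact_mod_cast this
  have ht0 : ∀ᶠ n in atTop, 0 < t n := by
    filter_upwards [hcpos, hmcpos] with n h1 h2; exact div_pos h1 h2
  have ht1 : ∀ᶠ n in atTop, t n < 1 := by
    filter_upwards [hmpos, hmcpos] with n h1 h2
    rw [div_lt_one h2]; linarith
  have ht : Tendsto t atTop (nhds 0) := by
    have h := hc.mul hinv
    rw [mul_one] at h
    refine h.congr' ?_
    filter_upwards [hnpos, hmcpos] with n h1 h2
    rw [ht_def]
    have h3 : m n + c n ≠ 0 := ne_of_gt h2
    field_simp
  have hkt : Tendsto (fun n => (k n : ℝ) * t n) atTop (nhds L) := by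
    have h := hkc.mul hinv
    rw [mul_one] at h
    refine h.congr' ?_
    filter_upwards [hnpos, hmcpos] with n h1 h2
    rw [ht_def]
    have h3 : m n + c n ≠ 0 := ne_of_gt h2
    field_simp
  have := pow_ratio_tendsto k t L ht0 ht1 ht hkt
  refine this.congr' ?_
  filter_upwards [hmcpos] with n h
  have he : (1:ℝ) - t n = m n / (m n + c n) := by
    rw [ht_def]
    field_simp
    ring
  rw [he]

lemma gamma_prod_eq (a c : ℝ) (ha : 0 < a) (hc : 0 < c) (k : ℕ) :
    Real.Gamma (a + k) * Real.Gamma (a + c) / (Real.Gamma a * Real.Gamma (a + c + k))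
      = ∏ j ∈ range k, ((a + j) / (a + c + j)) := by
  rw [myGamma_add_nat a ha k, myGamma_add_nat (a + c) (by linarith) k, prod_div_distrib]
  have h1 : Real.Gamma a ≠ 0 := (Real.Gamma_pos_of_pos ha).ne'
  have h2 : Real.Gamma (a + c) ≠ 0 := (Real.Gamma_pos_of_pos (by linarith)).ne'
  have h3 : (∏ j ∈ range k, (a + c + (j : ℝ))) ≠ 0 := by
    refine prod_ne_zero_iff.mpr fun j _ => ?_
    have hj : (0:ℝ) ≤ (j : ℝ) := Nat.cast_nonneg j
    exact ne_of_gt (by linarith)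
  field_simp


/-- Key Stirling-type gamma-ratio estimate: if `r_n → ∞`, `r_n/n → 0`, `x ≥ 0`
and `k_n = ⌊n x / r_n⌋`, then
`Γ(n) Γ(n - k_n + 2r_n - 1) / (Γ(n - k_n) Γ(n + 2r_n - 1)) → e^{-2x}`. -/
theorem gamma_ratio_tendsto_exp (r : ℕ → ℝ) (hr : ∀ n, 0 < r n)
    (h1 : Tendsto r atTop atTop) (h2 : Tendsto (fun n => r n / (n : ℝ)) atTop (nhds 0))
    (x : ℝ) (hx : 0 ≤ x) :
    Tendsto
      (fun n : ℕ =>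
        Real.Gamma (n : ℝ) *
          Real.Gamma ((n : ℝ) - (⌊(n : ℝ) * x / r n⌋₊ : ℝ) + 2 * r n - 1) /
        (Real.Gamma ((n : ℝ) - (⌊(n : ℝ) * x / r n⌋₊ : ℝ)) *
          Real.Gamma ((n : ℝ) + 2 * r n - 1)))
      atTop (nhds (Real.exp (-2 * x))) := by
  set k : ℕ → ℕ := fun n => ⌊(n : ℝ) * x / r n⌋₊ with hk_def
  set c : ℕ → ℝ := fun n => 2 * r n - 1 with hc_def
  have hnpos : ∀ᶠ n : ℕ in atTop, 0 < (n : ℝ) := by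
    filter_upwards [eventually_ge_atTop 1] with n hn
    have : (0:ℕ) < n := hn
    exact_mod_cast this
  have hcpos : ∀ᶠ n : ℕ in atTop, 0 < c n := by
    filter_upwards [h1.eventually_ge_atTop 1] with n hn
    simp only [hc_def]; linarith
  -- k*r/n → x
  have hkru : ∀ᶠ n : ℕ in atTop, (k n : ℝ) * r n / n ≤ x := by
    filter_upwards [hnpos] with n hn
    have h5 : (k n : ℝ) ≤ (n : ℝ) * x / r n := Nat.floor_le (div_nonneg (by positivity) (hr n).le)
    rw [div_le_iff₀ hn, mul_comm]
    calc r n * (k n : ℝ) ≤ r n * ((n : ℝ) * x / r n) := by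
          exact mul_le_mul_of_nonneg_left h5 (hr n).le
      _ = x * n := by field_simp [(hr n).ne']
  have hkrl : ∀ᶠ n : ℕ in atTop, x - r n / n ≤ (k n : ℝ) * r n / n := by
    filter_upwards [hnpos] with n hn
    have h5 : (n : ℝ) * x / r n - 1 ≤ (k n : ℝ) := (Nat.sub_one_lt_floor _).le
    rw [le_div_iff₀ hn]
    have h6 : ((n : ℝ) * x / r n - 1) * r n ≤ (k n : ℝ) * r n :=
      mul_le_mul_of_nonneg_right h5 (hr n).le
    calc (x - r n / n) * n = ((n : ℝ) * x / r n - 1) * r n := by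
          field_simp [(hr n).ne', hn.ne']
      _ ≤ (k n : ℝ) * r n := h6
  have hkr : Tendsto (fun n : ℕ => (k n : ℝ) * r n / n) atTop (nhds x) := by
    have hl : Tendsto (fun n : ℕ => x - r n / n) atTop (nhds x) := by
      simpa using tendsto_const_nhds.sub h2
    exact tendsto_of_tendsto_of_tendsto_of_le_of_le' hl tendsto_const_nhds hkrl hkru
  -- k/n → 0
  have hkn : Tendsto (fun n : ℕ => (k n : ℝ) / n) atTop (nhds 0) := by
    have hu : Tendsto (fun n : ℕ => x * (r n)⁻¹) atTop (nhds 0) := by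
      simpa using tendsto_const_nhds.mul h1.inv_tendsto_atTop
    refine tendsto_of_tendsto_of_tendsto_of_le_of_le' tendsto_const_nhds hu ?_ ?_
    · filter_upwards with n; positivity
    · filter_upwards [hnpos] with n hn
      have h5 : (k n : ℝ) ≤ (n : ℝ) * x / r n := Nat.floor_le (div_nonneg (by positivity) (hr n).le)
      rw [div_le_iff₀ hn]
      calc (k n : ℝ) ≤ (n : ℝ) * x / r n := h5
        _ = x * (r n)⁻¹ * n := by field_simp [(hr n).ne']
  -- k*c/n → 2x
  have hkc2 : Tendsto (fun n : ℕ => (k n : ℝ) * c n / n) atTop (nhds (2 * x)) := by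
    have h := ((hkr.const_mul 2).sub hkn)
    have he : (fun n : ℕ => 2 * ((k n : ℝ) * r n / n) - (k n : ℝ) / n)
        = fun n : ℕ => (k n : ℝ) * c n / n := by
      funext n
      simp only [hc_def]
      ring
    rw [he] at h
    simpa using h
  -- c/n → 0
  have hcn : Tendsto (fun n : ℕ => c n / n) atTop (nhds 0) := by
    have h := (h2.const_mul 2).sub tendsto_one_div_atTop_nhds_zero_nat
    have he : (fun n : ℕ => 2 * (r n / n) - 1 / n) = fun n : ℕ => c n / n := by
      funext n; simp only [hc_def]; ring
    rw [he] at h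
    simpa using h
  -- eventually k n < n etc.
  have hklt : ∀ᶠ n : ℕ in atTop, (k n : ℝ) + 1 ≤ (n : ℝ) := by
    have h5 := hkn.eventually (gt_mem_nhds (by norm_num : (0:ℝ) < 1/2))
    filter_upwards [h5, eventually_ge_atTop 2] with n hn h2n
    have hn2 : (2:ℝ) ≤ (n:ℝ) := by exact_mod_cast h2n
    have hnp : (0:ℝ) < n := by linarith
    rw [div_lt_iff₀ hnp] at hn
    nlinarith
  have hn2 : ∀ᶠ n : ℕ in atTop, (2:ℝ) ≤ (n:ℝ) := by
    filter_upwards [eventually_ge_atTop 2] with n h2n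
    exact_mod_cast h2n
  -- m/n → 1 for both m's
  have hm1 : Tendsto (fun n : ℕ => ((n : ℝ) - k n) / n) atTop (nhds 1) := by
    have h := (tendsto_const_nhds : Tendsto (fun _ : ℕ => (1:ℝ)) atTop (nhds 1)).sub hkn
    rw [sub_zero] at h
    refine Tendsto.congr' ?_ h
    filter_upwards [hnpos] with n hn
    field_simp
  have hm2 : Tendsto (fun n : ℕ => ((n : ℝ) - 1) / n) atTop (nhds 1) := by
    have h := (tendsto_const_nhds : Tendsto (fun _ : ℕ => (1:ℝ)) atTop (nhds 1)).sub
      tendsto_one_div_atTop_nhds_zero_nat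
    rw [sub_zero] at h
    refine Tendsto.congr' ?_ h
    filter_upwards [hnpos] with n hn
    field_simp
  -- bounds tendsto
  have hLo := ratio_pow_tendsto k (fun n => (n : ℝ) - k n) c (2 * x) hm1 hcn hcpos
    (by filter_upwards [hklt] with n h; linarith) hkc2
  have hHi := ratio_pow_tendsto k (fun n => (n : ℝ) - 1) c (2 * x) hm2 hcn hcpos
    (by filter_upwards [hn2] with n h; linarith) hkc2
  rw [show -2 * x = -(2 * x) by ring]
  refine tendsto_of_tendsto_of_tendsto_of_le_of_le' hLo hHi ?_ ?_
  · -- lower bound ≤ F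
    filter_upwards [hcpos, hklt, hn2] with n hc1 hk1 hn1
    set a : ℝ := (n : ℝ) - (k n : ℝ) with ha_def
    have ha : 0 < a := by rw [ha_def]; linarith
    have e1 : a + (k n : ℝ) = (n : ℝ) := by rw [ha_def]; ring
    have e2 : a + c n = a + 2 * r n - 1 := by simp only [hc_def]; ring
    have e3 : a + c n + (k n : ℝ) = (n : ℝ) + 2 * r n - 1 := by
      rw [ha_def]; simp only [hc_def]; ring
    have hF : Real.Gamma ((n:ℝ)) * Real.Gamma (a + 2 * r n - 1) /
        (Real.Gamma a * Real.Gamma ((n:ℝ) + 2 * r n - 1))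
        = ∏ j ∈ Finset.range (k n), ((a + j) / (a + c n + j)) := by
      have h := gamma_prod_eq a (c n) ha hc1 (k n)
      rw [e1, e3] at h
      rw [show Real.Gamma (a + c n) = Real.Gamma (a + 2 * r n - 1) from by rw [e2]] at h
      exact h
    rw [hF]
    calc (a / (a + c n)) ^ k n = ∏ _j ∈ Finset.range (k n), a / (a + c n) := by
          rw [Finset.prod_const, Finset.card_range]
      _ ≤ ∏ j ∈ Finset.range (k n), ((a + j) / (a + c n + j)) := by
          refine Finset.prod_le_prod (fun j _ => div_nonneg ha.le (by linarith)) ?_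
          intro j _
          have hj : (0:ℝ) ≤ (j : ℝ) := Nat.cast_nonneg j
          rw [div_le_div_iff₀ (by linarith) (by linarith)]
          nlinarith
  · filter_upwards [hcpos, hklt, hn2] with n hc1 hk1 hn1
    set a : ℝ := (n : ℝ) - (k n : ℝ) with ha_def
    have ha : 0 < a := by rw [ha_def]; linarith
    have e1 : a + (k n : ℝ) = (n : ℝ) := by rw [ha_def]; ring
    have e2 : a + c n = a + 2 * r n - 1 := by simp only [hc_def]; ring
    have e3 : a + c n + (k n : ℝ) = (n : ℝ) + 2 * r n - 1 := by
      rw [ha_def]; simp only [hc_def]; ring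
    have hF : Real.Gamma ((n:ℝ)) * Real.Gamma (a + 2 * r n - 1) /
        (Real.Gamma a * Real.Gamma ((n:ℝ) + 2 * r n - 1))
        = ∏ j ∈ Finset.range (k n), ((a + j) / (a + c n + j)) := by
      have h := gamma_prod_eq a (c n) ha hc1 (k n)
      rw [e1, e3] at h
      rw [show Real.Gamma (a + c n) = Real.Gamma (a + 2 * r n - 1) from by rw [e2]] at h
      exact h
    rw [hF]
    calc ∏ j ∈ Finset.range (k n), ((a + j) / (a + c n + j))
        ≤ ∏ _j ∈ Finset.range (k n), (((n:ℝ) - 1) / ((n:ℝ) - 1 + c n)) := by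
          refine Finset.prod_le_prod ?_ ?_
          · intro j _
            have hj : (0:ℝ) ≤ (j : ℝ) := Nat.cast_nonneg j
            exact div_nonneg (by linarith) (by linarith)
          · intro j hjm
            have hj : (0:ℝ) ≤ (j : ℝ) := Nat.cast_nonneg j
            have hjk : (j : ℝ) + 1 ≤ (k n : ℝ) := by
              have := Finset.mem_range.mp hjm
              exact_mod_cast this
            have haj : a + (j : ℝ) ≤ (n : ℝ) - 1 := by rw [ha_def]; linarith
            rw [div_le_div_iff₀ (by linarith) (by linarith)]
            nlinarith
      _ = (((n:ℝ) - 1) / ((n:ℝ) - 1 + c n)) ^ k n := by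
          rw [Finset.prod_const, Finset.card_range]
end

section
/- Let (r_n) be a sequence of positive real numbers with r_n → ∞ and r_n/n → 0 as n → ∞, and set k_n = ⌈n·log(r_n)/r_n⌉. Then binom(n, k_n) · (1+r_n)^{−(k_n−1)} → 0 as n → ∞. (Consequently, the clique number κ_n of the split-and-drift random graph G_{n,r_n} satisfies κ_n ≤ n·log(r_n)/r_n asymptotically almost surely.) -/
open Filter

lemma aux_one_add_div_sq_tendsto :
    Tendsto (fun x : ℝ => (1 + x) / x ^ 2) atTop (nhds 0) := by
  have h : Tendsto (fun x : ℝ => x⁻¹ * x⁻¹ + x⁻¹) atTop (nhds 0) := by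
    have := tendsto_inv_atTop_zero (𝕜 := ℝ)
    simpa using (this.mul this).add this
  refine h.congr' ?_
  filter_upwards [eventually_gt_atTop (0 : ℝ)] with x hx
  rw [eq_div_iff (by positivity : (x : ℝ) ^ 2 ≠ 0)]
  field_simp

/-- If `r_n → ∞` and `r_n/n → 0`, and `k_n = ⌈n log(r_n) / r_n⌉`, then
`C(n, k_n) · (1+r_n)^{-(k_n-1)} → 0`. (Hence the clique number of `G_{n,r_n}`
is at most `n log(r_n)/r_n` asymptotically almost surely.) -/
theorem expected_cliques_tendsto_zero (r : ℕ → ℝ) (hr : ∀ n, 0 < r n)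
    (h1 : Tendsto r atTop atTop) (h2 : Tendsto (fun n => r n / (n : ℝ)) atTop (nhds 0)) :
    Tendsto
      (fun n : ℕ =>
        (n.choose ⌈(n : ℝ) * Real.log (r n) / r n⌉₊ : ℝ) *
          (1 + r n) ^ (-((⌈(n : ℝ) * Real.log (r n) / r n⌉₊ : ℤ) - 1)))
      atTop (nhds 0) := by
  have hg : Tendsto (fun n : ℕ => (1 + r n) / (r n) ^ 2) atTop (nhds 0) :=
    aux_one_add_div_sq_tendsto.comp h1
  refine squeeze_zero' ?_ ?_ hg
  · filter_upwards with n
    have hb : (0 : ℝ) < 1 + r n := by linarith [hr n]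
    positivity
  · have hA : ∀ᶠ n : ℕ in atTop, Real.exp (Real.exp 3) ≤ r n :=
      h1.eventually (eventually_ge_atTop _)
    have hB : ∀ᶠ n : ℕ in atTop, r n / (n : ℝ) ≤ 1 :=
      h2.eventually (eventually_le_nhds (by norm_num))
    filter_upwards [hA, hB, eventually_ge_atTop 1] with n hAn hBn hn1
    set R := r n with hR
    have hRpos : 0 < R := hr n
    have hnpos : (0 : ℝ) < n := by exact_mod_cast hn1
    have hRn : R ≤ (n : ℝ) := by
      have := (div_le_one hnpos).mp hBn
      linarith
    have hlog : Real.exp 3 ≤ Real.log R := (Real.le_log_iff_exp_le hRpos).mpr hAn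
    have hlogpos : 0 < Real.log R := lt_of_lt_of_le (Real.exp_pos 3) hlog
    set k := ⌈(n : ℝ) * Real.log R / R⌉₊ with hkdef
    have hkle : (n : ℝ) * Real.log R / R ≤ k := Nat.le_ceil _
    have hk1 : 1 ≤ k := by
      rw [hkdef]
      exact Nat.one_le_iff_ne_zero.mpr (Nat.ceil_pos.mpr (by positivity)).ne'
    have hkpos : (0 : ℝ) < k := by exact_mod_cast hk1
    have hklog : Real.log R ≤ (k : ℝ) := by
      refine le_trans ?_ hkle
      rw [le_div_iff₀ hRpos]
      nlinarith
    have hkr : (n : ℝ) * Real.log R ≤ (k : ℝ) * R := by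
      rw [div_le_iff₀ hRpos] at hkle
      linarith
    set b := 1 + R with hbdef
    have hb : (0 : ℝ) < b := by linarith
    -- rewrite the zpow
    have hrw : b ^ (-((k : ℤ) - 1)) = b * ((b ^ k : ℝ))⁻¹ := by
      rw [show -((k : ℤ) - 1) = 1 + -(k : ℤ) by ring, zpow_add₀ hb.ne', zpow_one,
        zpow_neg, zpow_natCast]
    rw [hrw, ← mul_assoc, mul_comm ((n.choose k : ℝ)) b, mul_assoc, ← div_eq_mul_inv]
    have hkk : ((k : ℝ)) ^ k ≤ Real.exp 1 ^ k * (k.factorial : ℝ) := by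
      have h := Real.pow_div_factorial_le_exp (x := (k : ℝ)) (Nat.cast_nonneg k) k
      rw [div_le_iff₀ (by positivity)] at h
      calc ((k : ℝ)) ^ k ≤ Real.exp (k : ℝ) * (k.factorial : ℝ) := h
        _ = Real.exp 1 ^ k * (k.factorial : ℝ) := by
            rw [← Real.exp_nat_mul, mul_one]
    have hC : (n.choose k : ℝ) ≤ (n : ℝ) ^ k * Real.exp 1 ^ k / (k : ℝ) ^ k := by
      refine le_trans (Nat.choose_le_pow_div (α := ℝ) k n) ?_
      rw [div_le_div_iff₀ (by positivity) (by positivity)]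
      calc ((n : ℝ)) ^ k * (k : ℝ) ^ k ≤ (n : ℝ) ^ k * (Real.exp 1 ^ k * (k.factorial : ℝ)) :=
            mul_le_mul_of_nonneg_left hkk (by positivity)
        _ = (n : ℝ) ^ k * Real.exp 1 ^ k * (k.factorial : ℝ) := by ring
    have key : (n.choose k : ℝ) / b ^ k ≤ 1 / R ^ 2 := by
      have e1 : (n.choose k : ℝ) / b ^ k ≤ ((n : ℝ) * Real.exp 1 / ((k : ℝ) * b)) ^ k := by
        rw [div_pow, mul_pow, mul_pow]
        exact div_le_div_of_nonneg_right hC (by positivity) |>.trans_eq (by ring_nf)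
      have e2 : (n : ℝ) * Real.exp 1 / ((k : ℝ) * b) ≤ Real.exp 1 / Real.log R := by
        rw [div_le_div_iff₀ (by positivity) hlogpos]
        have hkb : (n : ℝ) * Real.log R ≤ (k : ℝ) * b := by nlinarith
        nlinarith [Real.exp_pos 1]
      have e3 : Real.exp 1 / Real.log R ≤ Real.exp (-2) := by
        calc Real.exp 1 / Real.log R ≤ Real.exp 1 / Real.exp 3 :=
              div_le_div_of_nonneg_left (Real.exp_pos 1).le (Real.exp_pos 3) hlog
          _ = Real.exp (-2) := by rw [← Real.exp_sub]; norm_num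
      have e4 : ((n : ℝ) * Real.exp 1 / ((k : ℝ) * b)) ^ k ≤ Real.exp (-2) ^ k :=
        pow_le_pow_left₀ (by positivity) (e2.trans e3) k
      have e5 : Real.exp (-2) ^ k ≤ 1 / R ^ 2 := by
        rw [← Real.exp_nat_mul]
        have : Real.exp ((k : ℝ) * (-2)) ≤ Real.exp (Real.log R * (-2)) := by
          rw [Real.exp_le_exp]
          nlinarith
        refine this.trans_eq ?_
        rw [show Real.log R * (-2) = -(Real.log R + Real.log R) by ring, Real.exp_neg,
          Real.exp_add, Real.exp_log hRpos]
        rw [one_div, sq]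
      exact e1.trans (e4.trans e5)
    calc b * ((n.choose k : ℝ) / b ^ k) ≤ b * (1 / R ^ 2) :=
          mul_le_mul_of_nonneg_left key hb.le
      _ = (1 + R) / R ^ 2 := by rw [hbdef]; ring
end

section
/- Let (r_n) and (g_n) be sequences of positive real numbers such that r_n → ∞, r_n·log(n)/n is bounded (i.e. r_n = O(n/log n)), g_n → ∞, and g_n/r_n → 0. Set k_n = ⌈n·g_n/r_n⌉. Then binom(n, k_n) · (1+r_n)^{−(k_n−1)} → 0 as n → ∞. (Consequently, the clique number κ_n of the split-and-drift random graph G_{n,r_n} is O_P(n/r_n).) -/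
open Filter

/-- If `r_n → ∞`, `r_n = O(n/log n)`, `g_n → ∞` and `g_n/r_n → 0`, and
`k_n = ⌈n g_n / r_n⌉`, then `C(n, k_n) · (1+r_n)^{-(k_n-1)} → 0`. (Hence the
clique number of `G_{n,r_n}` is `O_P(n/r_n)`.) -/
theorem expected_cliques_tendsto_zero_general (r g : ℕ → ℝ)
    (hr : ∀ n, 0 < r n) (hg : ∀ n, 0 < g n)
    (h1 : Tendsto r atTop atTop)
    (h2 : ∃ C : ℝ, ∀ n : ℕ, r n * Real.log n / n ≤ C)
    (h3 : Tendsto g atTop atTop)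
    (h4 : Tendsto (fun n => g n / r n) atTop (nhds 0)) :
    Tendsto
      (fun n : ℕ =>
        (n.choose ⌈(n : ℝ) * g n / r n⌉₊ : ℝ) *
          (1 + r n) ^ (-((⌈(n : ℝ) * g n / r n⌉₊ : ℤ) - 1)))
      atTop (nhds 0) := by
  obtain ⟨C, hC⟩ := h2
  have hC0 : 0 < C := by
    have h3' := hC 3
    have hpos : 0 < r 3 * Real.log 3 / 3 := by
      have := hr 3
      have hlog3 : 0 < Real.log 3 := Real.log_pos (by norm_num)
      positivity
    calc (0:ℝ) < r 3 * Real.log 3 / 3 := hpos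
      _ ≤ C := by exact_mod_cast h3'
  have hub : Tendsto (fun n : ℕ => (1 + C) / (n : ℝ)) atTop (nhds 0) := by
    simpa [mul_one_div, div_eq_mul_inv] using tendsto_one_div_atTop_nhds_zero_nat.const_mul (1 + C)
  apply squeeze_zero' ?_ ?_ hub
  · filter_upwards with n
    exact mul_nonneg (Nat.cast_nonneg _) (zpow_nonneg (by linarith [hr n]) _)
  · filter_upwards [h3.eventually_ge_atTop (max (2 * Real.exp 1) (3 * C)),
      eventually_ge_atTop 3] with n hgn hn3
    set k := ⌈(n : ℝ) * g n / r n⌉₊ with hk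
    have hR : 0 < r n := hr n
    have hG : 0 < g n := hg n
    have hRpos : (0:ℝ) < 1 + r n := by linarith
    have hn3R : (3:ℝ) ≤ (n:ℝ) := by exact_mod_cast hn3
    have hnpos : (0:ℝ) < (n:ℝ) := by linarith
    have hlogn : 1 ≤ Real.log n := by
      rw [Real.le_log_iff_exp_le hnpos]
      calc Real.exp 1 ≤ 2.7182818286 := Real.exp_one_lt_d9.le
        _ ≤ (n:ℝ) := by linarith
    have hrC : r n * Real.log n ≤ C * n := by
      have := hC n
      rwa [div_le_iff₀ hnpos] at this
    have hrCn : r n ≤ C * n := by nlinarith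
    have hge : 2 * Real.exp 1 ≤ g n := le_trans (le_max_left _ _) hgn
    have h3C : 3 * C ≤ g n := le_trans (le_max_right _ _) hgn
    have hk1 : 1 ≤ k := Nat.one_le_ceil_iff.mpr (by positivity)
    have hkn : (n : ℝ) * g n / r n ≤ (k : ℝ) := Nat.le_ceil _
    have hng : (n : ℝ) * g n ≤ (k : ℝ) * r n := by rwa [div_le_iff₀ hR] at hkn
    have hnle : (n : ℝ) ≤ (k : ℝ) * r n / g n := by
      rw [le_div_iff₀ hG]; linarith
    have hklog : 3 * Real.log n ≤ (k : ℝ) := by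
      have hstep : 3 * Real.log n * r n ≤ (n : ℝ) * g n := by nlinarith
      have : 3 * Real.log n ≤ (n : ℝ) * g n / r n := by
        rw [le_div_iff₀ hR]; linarith
      linarith
    have hexp : (1 + r n) ^ (-((k : ℤ) - 1)) = (1 + r n) / (1 + r n) ^ k := by
      rw [neg_sub, zpow_sub₀ hRpos.ne', zpow_one, zpow_natCast]
    have hcnn : (0:ℝ) ≤ (1 + r n) / (1 + r n) ^ k :=
      div_nonneg hRpos.le (pow_nonneg hRpos.le k)
    have hbase : Real.exp 1 * r n / (g n * (1 + r n)) ≤ 1 / 2 := by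
      rw [div_le_iff₀ (by positivity)]
      nlinarith [Real.exp_pos 1]
    have h2k : (n : ℝ) ^ 2 ≤ 2 ^ k := by
      have e1 : (n : ℝ) ^ 2 = Real.exp ((2:ℕ) * Real.log n) := by
        rw [Real.exp_nat_mul, Real.exp_log hnpos]
      have e2 : (2:ℝ) ^ k = Real.exp ((k:ℕ) * Real.log 2) := by
        rw [Real.exp_nat_mul, Real.exp_log (by norm_num)]
      rw [e1, e2]
      apply Real.exp_le_exp.mpr
      have hlog2 : (0.6931471803 : ℝ) ≤ Real.log 2 := Real.log_two_gt_d9.le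
      push_cast
      nlinarith [hklog, hlogn]
    have hhalf : ((1:ℝ) / 2) ^ k ≤ 1 / (n : ℝ) ^ 2 := by
      rw [div_pow, one_pow]
      exact one_div_le_one_div_of_le (by positivity) h2k
    have hA : ((k : ℝ)) ^ k / (k.factorial : ℝ) ≤ Real.exp 1 ^ k := by
      rw [Real.exp_one_pow]
      exact Real.pow_div_factorial_le_exp (k:ℝ) (by positivity) k
    calc (n.choose k : ℝ) * (1 + r n) ^ (-((k : ℤ) - 1))
        = (n.choose k : ℝ) * ((1 + r n) / (1 + r n) ^ k) := by rw [hexp]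
      _ ≤ ((n : ℝ) ^ k / (k.factorial : ℝ)) * ((1 + r n) / (1 + r n) ^ k) := by
          apply mul_le_mul_of_nonneg_right _ hcnn
          exact_mod_cast Nat.choose_le_pow_div k n
      _ ≤ (((k : ℝ) * r n / g n) ^ k / (k.factorial : ℝ)) *
            ((1 + r n) / (1 + r n) ^ k) := by
          apply mul_le_mul_of_nonneg_right _ hcnn
          apply div_le_div_of_nonneg_right ?_ (by positivity)
          exact pow_le_pow_left₀ hnpos.le hnle k
      _ = (1 + r n) * (((k : ℝ) ^ k / (k.factorial : ℝ)) *
            ((r n / g n / (1 + r n)) ^ k)) := by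
          simp only [mul_div_assoc, mul_pow, div_pow]
          ring
      _ ≤ (1 + r n) * (Real.exp 1 ^ k * ((r n / g n / (1 + r n)) ^ k)) := by
          apply mul_le_mul_of_nonneg_left _ hRpos.le
          apply mul_le_mul_of_nonneg_right hA
          positivity
      _ = (1 + r n) * (Real.exp 1 * r n / (g n * (1 + r n))) ^ k := by
          simp only [mul_pow, div_pow]
          ring
      _ ≤ (1 + r n) * ((1:ℝ) / 2) ^ k := by
          apply mul_le_mul_of_nonneg_left _ hRpos.le
          exact pow_le_pow_left₀ (by positivity) hbase k
      _ ≤ (1 + r n) * (1 / (n : ℝ) ^ 2) := mul_le_mul_of_nonneg_left hhalf hRpos.le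
      _ ≤ (1 + C) / (n : ℝ) := by
          rw [mul_one_div, div_le_div_iff₀ (by positivity) hnpos]
          nlinarith
end
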